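/- arXiv:math/0610256 — 4 statements merged into one kernel-verified Lean document; each statement's English description precedes it below -/
import Mathlib

section
/- Computational step of Lemma 3.1 (harmonic coordinate functions kill the contracted Christoffel symbols): let g be a Riemannian metric in local coordinates on an open set U ⊆ ℝⁿ and let φ : U → ℝⁿ, x ↦ x̄ = (x̄¹, …, x̄ⁿ), be a smooth diffeomorphism onto its image such that each component satisfies the elliptic equation −Σ_{k,l} g^{kl} ∂²x̄^i/∂x^k∂x^l + Σ_{k,l,j} g^{kl} Γ^j_{kl} ∂x̄^i/∂x^j = 0 on U. Then the transformed metric ḡ on φ(U), defined by ḡ_{ij}(x̄) = Σ_{m,n} g_{mn}(x)(∂x^m/∂x̄^i)(∂x^n/∂x̄^j) with x = φ^{−1}(x̄), satisfies Γ̄^k = Σ_{i,j} ḡ^{ij} Γ̄^k_{ij} = 0 everywhere on φ(U), for every k. -/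
noncomputable section

open scoped BigOperators

/-- Partial derivative of a scalar function on `ℝⁿ` in the `i`-th coordinate direction. -/
def pd {n : ℕ} (i : Fin n) (f : (Fin n → ℝ) → ℝ) (x : Fin n → ℝ) : ℝ :=
  fderiv ℝ f x (Pi.single i 1)

/-- Christoffel symbols `Γ^k_{ij}` of a metric given in local coordinates. -/
def chris {n : ℕ} (g : (Fin n → ℝ) → Matrix (Fin n) (Fin n) ℝ) (k i j : Fin n)
    (x : Fin n → ℝ) : ℝ :=
  (1 / 2) * ∑ l, (g x)⁻¹ k l *
    (pd i (fun y => g y j l) x + pd j (fun y => g y i l) x - pd l (fun y => g y i j) x)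

/-- Curvature tensor `R^k_{ijl}`. -/
def riemUp {n : ℕ} (g : (Fin n → ℝ) → Matrix (Fin n) (Fin n) ℝ) (k i j l : Fin n)
    (x : Fin n → ℝ) : ℝ :=
  pd i (chris g k j l) x - pd j (chris g k i l) x +
    ∑ p, (chris g k i p x * chris g p j l x - chris g k j p x * chris g p i l x)

/-- Curvature tensor `R_{ijkl} = Σ_p g_{kp} R^p_{ijl}`. -/
def riem {n : ℕ} (g : (Fin n → ℝ) → Matrix (Fin n) (Fin n) ℝ) (i j k l : Fin n)
    (x : Fin n → ℝ) : ℝ :=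
  ∑ p, g x k p * riemUp g p i j l x

/-- Ricci tensor `R_{ik} = Σ_{j,l} g^{jl} R_{ijkl}`. -/
def ricci {n : ℕ} (g : (Fin n → ℝ) → Matrix (Fin n) (Fin n) ℝ) (i k : Fin n)
    (x : Fin n → ℝ) : ℝ :=
  ∑ j, ∑ l, (g x)⁻¹ j l * riem g i j k l x

/-- The transformed ("pulled back") metric `ḡ_{ij}(x̄) = Σ g_{mn}(ψ x̄) (∂ψ^m/∂x̄^i)(∂ψ^n/∂x̄^j)`,
where `ψ` is the inverse coordinate transformation. -/
def pullMetric {n : ℕ} (ψ : (Fin n → ℝ) → (Fin n → ℝ))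
    (g : (Fin n → ℝ) → Matrix (Fin n) (Fin n) ℝ) :
    (Fin n → ℝ) → Matrix (Fin n) (Fin n) ℝ :=
  fun z => Matrix.of fun i j =>
    ∑ a, ∑ b, g (ψ z) a b * pd i (fun w => ψ w a) z * pd j (fun w => ψ w b) z

open scoped ContDiff

lemma two_le_inf : (2 : WithTop ℕ∞) ≤ ∞ := by
  have := ENat.add_one_natCast_le_withTop_of_lt (n := ((⊤:ℕ∞) : WithTop ℕ∞)) (m := 1)
    (by exact_mod_cast ENat.coe_lt_top 1)
  exact_mod_cast this


variable {n : ℕ}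

lemma pd_congr {i : Fin n} {f f' : (Fin n → ℝ) → ℝ} {x : Fin n → ℝ}
    (h : f =ᶠ[nhds x] f') : pd i f x = pd i f' x := by
  unfold pd; rw [Filter.EventuallyEq.fderiv_eq h.symm]

lemma fderiv_apply_eq_sum_pd {f : (Fin n → ℝ) → ℝ} {x : Fin n → ℝ}
    (hf : DifferentiableAt ℝ f x) (v : Fin n → ℝ) :
    fderiv ℝ f x v = ∑ a, v a * pd a f x := by
  have hv : v = ∑ a, v a • (Pi.single a 1 : Fin n → ℝ) := by
    funext b
    simp [Finset.sum_apply, Pi.single_apply, mul_comm]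
  conv_lhs => rw [hv]
  rw [map_sum]
  exact Finset.sum_congr rfl fun a _ => by rw [map_smul]; rfl

lemma pd_comp {i : Fin n} {f : (Fin n → ℝ) → ℝ} {ψ : (Fin n → ℝ) → (Fin n → ℝ)}
    {x : Fin n → ℝ} (hψ : DifferentiableAt ℝ ψ x) (hf : DifferentiableAt ℝ f (ψ x)) :
    pd i (fun w => f (ψ w)) x = ∑ a, pd a f (ψ x) * pd i (fun w => ψ w a) x := by
  unfold pd
  rw [show (fun w => f (ψ w)) = f ∘ ψ from rfl, fderiv_comp (x := x) hf hψ]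
  have h1 : (fderiv ℝ ψ x) (Pi.single i 1) = fun a => fderiv ℝ (fun w => ψ w a) x (Pi.single i 1) := by
    funext a
    have : (fun w => ψ w a) = (ContinuousLinearMap.proj a : (Fin n → ℝ) →L[ℝ] ℝ) ∘ ψ := rfl
    rw [this, fderiv_comp (x := x) (ContinuousLinearMap.differentiableAt _) hψ]
    simp
  simp only [ContinuousLinearMap.coe_comp', Function.comp_apply, h1]
  rw [fderiv_apply_eq_sum_pd hf]
  exact Finset.sum_congr rfl fun a _ => by unfold pd; ring

lemma pd_sum {i : Fin n} {x : Fin n → ℝ} {s : Finset (Fin n)} {f : Fin n → (Fin n → ℝ) → ℝ}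
    (hf : ∀ a ∈ s, DifferentiableAt ℝ (f a) x) :
    pd i (fun w => ∑ a ∈ s, f a w) x = ∑ a ∈ s, pd i (f a) x := by
  unfold pd; rw [fderiv_fun_sum hf]; simp

lemma pd_mul {i : Fin n} {x : Fin n → ℝ} {f g : (Fin n → ℝ) → ℝ}
    (hf : DifferentiableAt ℝ f x) (hg : DifferentiableAt ℝ g x) :
    pd i (fun w => f w * g w) x = pd i f x * g x + f x * pd i g x := by
  unfold pd; rw [fderiv_fun_mul hf hg]; simp [mul_comm]; ring

lemma pd_proj {i a : Fin n} {x : Fin n → ℝ} :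
    pd i (fun w => w a) x = if a = i then 1 else 0 := by
  unfold pd
  have : (fun w : Fin n → ℝ => w a) = (ContinuousLinearMap.proj a : (Fin n → ℝ) →L[ℝ] ℝ) := rfl
  rw [this, ContinuousLinearMap.fderiv]
  simp [Pi.single_apply]

-- second derivative symmetry
lemma pd_pd_symm {f : (Fin n → ℝ) → ℝ} {x : Fin n → ℝ}
    (hf : ContDiffAt ℝ (⊤ : ℕ∞) f x) (i j : Fin n) :
    pd i (fun w => pd j f w) x = pd j (fun w => pd i f w) x := by
  have hsymm : IsSymmSndFDerivAt ℝ f x :=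
    hf.isSymmSndFDerivAt (by simp [minSmoothness_of_isRCLikeNormedField, two_le_inf])
  have hd : DifferentiableAt ℝ (fderiv ℝ f) x := by
    have h1 : ContDiffAt ℝ (1 : ℕ∞) (fderiv ℝ f) x := hf.fderiv_right (m := (1:ℕ∞))
      (by norm_num [two_le_inf])
    exact h1.differentiableAt (by simp)
  have key : ∀ u v : Fin n → ℝ, pd i (fun w => fderiv ℝ f w (Pi.single j 1)) x
      = (fderiv ℝ (fderiv ℝ f) x (Pi.single i 1)) (Pi.single j 1) := by
    intro u v
    unfold pd
    rw [fderiv_clm_apply hd (differentiableAt_const _)]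
    simp
  unfold pd
  have e1 : fderiv ℝ (fun w => fderiv ℝ f w (Pi.single j 1)) x (Pi.single i 1)
      = (fderiv ℝ (fderiv ℝ f) x (Pi.single i 1)) (Pi.single j 1) := by
    rw [fderiv_clm_apply hd (differentiableAt_const _)]; simp
  have e2 : fderiv ℝ (fun w => fderiv ℝ f w (Pi.single i 1)) x (Pi.single j 1)
      = (fderiv ℝ (fderiv ℝ f) x (Pi.single j 1)) (Pi.single i 1) := by
    rw [fderiv_clm_apply hd (differentiableAt_const _)]; simp
  rw [e1, e2, hsymm]


lemma pd_const {n : ℕ} {i : Fin n} {x : Fin n → ℝ} (c : ℝ) : pd i (fun _ => c) x = 0 := by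
  simp [pd]

lemma one_le_inf : (1 : WithTop ℕ∞) ≤ ((⊤:ℕ∞) : WithTop ℕ∞) := by
  exact_mod_cast ENat.add_one_natCast_le_withTop_of_lt (n := ((⊤:ℕ∞) : WithTop ℕ∞)) (m := 0)
    (by exact_mod_cast ENat.coe_lt_top 0)

lemma inf_add_one_le : ((⊤:ℕ∞) : WithTop ℕ∞) + 1 ≤ ((⊤:ℕ∞) : WithTop ℕ∞) := by norm_num

lemma dat {n : ℕ} {f : (Fin n → ℝ) → ℝ} {x : Fin n → ℝ}
    (hf : ContDiffAt ℝ (⊤ : ℕ∞) f x) : DifferentiableAt ℝ f x :=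
  hf.differentiableAt (by simp)

lemma cdat_pd {n : ℕ} {f : (Fin n → ℝ) → ℝ} {x : Fin n → ℝ}
    (hf : ContDiffAt ℝ (⊤ : ℕ∞) f x) (l : Fin n) :
    ContDiffAt ℝ (⊤ : ℕ∞) (pd l f) x := by
  have h1 : ContDiffAt ℝ ((⊤:ℕ∞) : WithTop ℕ∞) (fderiv ℝ f) x := hf.fderiv_right inf_add_one_le
  exact h1.clm_apply contDiffAt_const

variable {n : ℕ}

section helpers
variable {M : Type*} [AddCommMonoid M]

lemma scg1 {f g : Fin n → M} (h : ∀ a, f a = g a) : ∑ a, f a = ∑ a, g a :=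
  Finset.sum_congr rfl fun a _ => h a

lemma scg2 {f g : Fin n → Fin n → M} (h : ∀ a b, f a b = g a b) :
    ∑ a, ∑ b, f a b = ∑ a, ∑ b, g a b :=
  Finset.sum_congr rfl fun a _ => Finset.sum_congr rfl fun b _ => h a b

lemma scg3 {f g : Fin n → Fin n → Fin n → M} (h : ∀ a b c, f a b c = g a b c) :
    ∑ a, ∑ b, ∑ c, f a b c = ∑ a, ∑ b, ∑ c, g a b c :=
  Finset.sum_congr rfl fun a _ => scg2 (h a)

lemma rot2 (f : Fin n → Fin n → M) : ∑ i, ∑ j, f i j = ∑ j, ∑ i, f i j := Finset.sum_comm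

lemma rot3 (f : Fin n → Fin n → Fin n → M) :
    ∑ i, ∑ j, ∑ p, f i j p = ∑ j, ∑ p, ∑ i, f i j p := by
  rw [Finset.sum_comm]
  exact Finset.sum_congr rfl fun j _ => Finset.sum_comm

lemma rot4 (f : Fin n → Fin n → Fin n → Fin n → M) :
    ∑ i, ∑ j, ∑ p, ∑ q, f i j p q = ∑ j, ∑ p, ∑ q, ∑ i, f i j p q := by
  rw [Finset.sum_comm]
  exact Finset.sum_congr rfl fun j _ => rot3 _

lemma rot5 (f : Fin n → Fin n → Fin n → Fin n → Fin n → M) :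
    ∑ i, ∑ j, ∑ p, ∑ q, ∑ r, f i j p q r = ∑ j, ∑ p, ∑ q, ∑ r, ∑ i, f i j p q r := by
  rw [Finset.sum_comm]
  exact Finset.sum_congr rfl fun j _ => rot4 _

end helpers

lemma pull1 (c : ℝ) (f : Fin n → ℝ) : c * (∑ i, f i) = ∑ i, c * f i := Finset.mul_sum _ _ _

lemma pull2 (c : ℝ) (f : Fin n → Fin n → ℝ) :
    c * (∑ i, ∑ j, f i j) = ∑ i, ∑ j, c * f i j := by
  rw [pull1]; exact scg1 fun i => pull1 _ _

lemma pull3 (c : ℝ) (f : Fin n → Fin n → Fin n → ℝ) :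
    c * (∑ i, ∑ j, ∑ p, f i j p) = ∑ i, ∑ j, ∑ p, c * f i j p := by
  rw [pull1]; exact scg1 fun i => pull2 _ _

lemma neg2 (f : Fin n → Fin n → ℝ) : ∑ a, ∑ b, -f a b = -∑ a, ∑ b, f a b := by
  simp

lemma alg (J K G Gi : Fin n → Fin n → ℝ)
    (Dg H S Db Γ : Fin n → Fin n → Fin n → ℝ)
    (Ab : Fin n → Fin n → ℝ) (γ : Fin n → ℝ)
    (hJK : ∀ a b, ∑ i, J a i * K i b = if a = b then (1:ℝ) else 0)
    (hKJ : ∀ i j, ∑ a, K i a * J a j = if i = j then (1:ℝ) else 0)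
    (hGGi : ∀ a b, ∑ c, G a c * Gi c b = if a = b then (1:ℝ) else 0)
    (hGiG : ∀ a b, ∑ c, Gi a c * G c b = if a = b then (1:ℝ) else 0)
    (hGsym : ∀ a b, G a b = G b a) (hGisym : ∀ a b, Gi a b = Gi b a)
    (hSsym : ∀ a i j, S a i j = S a j i)
    (hS : ∀ a i j, S a i j = -∑ p, ∑ b, ∑ c, J a p * H p b c * J b i * J c j)
    (hΓ : ∀ c a b, Γ c a b = (1/2) * ∑ m, Gi c m * (Dg a b m + Dg b a m - Dg m a b))
    (hharm : ∀ p, ∑ a, ∑ b, Gi a b * H p a b = ∑ a, ∑ b, ∑ c, Gi a b * Γ c a b * K p c)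
    (hAb : ∀ i j, Ab i j = ∑ a, ∑ b, K i a * Gi a b * K j b)
    (hγ : ∀ c, γ c = ∑ a, ∑ b, Gi a b * Γ c a b)
    (hDb : ∀ i j l, Db i j l =
      (∑ a, ∑ b, ∑ c, Dg c a b * J c i * J a j * J b l)
      + (∑ a, ∑ b, G a b * S a i j * J b l)
      + (∑ a, ∑ b, G a b * J a j * S b i l))
    (k : Fin n) :
    ∑ i, ∑ j, Ab i j * ((1/2) * ∑ l, Ab k l * (Db i j l + Db j i l - Db l i j)) = 0 := by
  have hAbsym : ∀ i j, Ab i j = Ab j i := by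
    intro i j
    rw [hAb, hAb, rot2]
    exact scg2 fun b a => by rw [hGisym]; ring
  -- C1 : contraction of Ab with two J's gives Gi
  have C1 : ∀ a b, ∑ i, ∑ j, Ab i j * (J a i * J b j) = Gi a b := by
    intro a b
    calc ∑ i, ∑ j, Ab i j * (J a i * J b j)
        = ∑ i, ∑ j, ∑ p, ∑ q, K i p * Gi p q * K j q * (J a i * J b j) := by
          refine scg2 fun i j => ?_
          rw [hAb, Finset.sum_mul]
          exact scg1 fun p => by rw [Finset.sum_mul]
      _ = ∑ p, ∑ q, ∑ i, ∑ j, K i p * Gi p q * K j q * (J a i * J b j) := by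
          rw [rot4, rot4]
      _ = ∑ p, ∑ q, Gi p q * ((∑ i, J a i * K i p) * (∑ j, J b j * K j q)) := by
          refine scg2 fun p q => ?_
          rw [Finset.sum_mul_sum, pull2]
          exact scg2 fun i j => by ring
      _ = Gi a b := by
          simp only [hJK]
          simp [mul_ite, ite_mul, Finset.sum_ite_eq, Finset.mem_univ]
  -- C2 : contraction of Ab with one J
  have C2 : ∀ i a, ∑ j, Ab i j * J a j = ∑ p, K i p * Gi p a := by
    intro i a
    calc ∑ j, Ab i j * J a j
        = ∑ j, ∑ p, ∑ q, K i p * Gi p q * K j q * J a j := by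
          refine scg1 fun j => ?_
          rw [hAb, Finset.sum_mul]
          exact scg1 fun p => by rw [Finset.sum_mul]
      _ = ∑ p, ∑ q, ∑ j, K i p * Gi p q * K j q * J a j := by rw [rot3]
      _ = ∑ p, ∑ q, (K i p * Gi p q) * (∑ j, J a j * K j q) := by
          refine scg2 fun p q => ?_
          rw [pull1]
          exact scg1 fun j => by ring
      _ = ∑ p, K i p * Gi p a := by
          simp only [hJK]
          simp [mul_ite, ite_mul, Finset.sum_ite_eq, Finset.mem_univ]
  have C2' : ∀ j a, ∑ i, Ab i j * J a i = ∑ q, K j q * Gi q a := by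
    intro j a
    calc ∑ i, Ab i j * J a i = ∑ i, Ab j i * J a i := scg1 fun i => by rw [hAbsym i j]
      _ = ∑ q, K j q * Gi q a := C2 j a
  -- the auxiliary function h p = Gi-contraction of H
  obtain ⟨hf, hhf⟩ : ∃ h : Fin n → ℝ, ∀ p, h p = ∑ b, ∑ c, Gi b c * H p b c :=
    ⟨_, fun _ => rfl⟩
  have hh2 : ∀ p, hf p = ∑ c, γ c * K p c := by
    intro p
    rw [hhf, hharm]
    calc ∑ a, ∑ b, ∑ c, Gi a b * Γ c a b * K p c
        = ∑ c, ∑ a, ∑ b, Gi a b * Γ c a b * K p c := by rw [rot3, rot3]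
      _ = ∑ c, γ c * K p c := by
          refine scg1 fun c => ?_
          rw [hγ, Finset.sum_mul]
          exact scg1 fun a => by rw [Finset.sum_mul]
  have γstep : ∀ a, ∑ p, J a p * hf p = γ a := by
    intro a
    calc ∑ p, J a p * hf p
        = ∑ p, ∑ c, γ c * (J a p * K p c) := by
          refine scg1 fun p => ?_
          rw [hh2, pull1]
          exact scg1 fun c => by ring
      _ = ∑ c, ∑ p, γ c * (J a p * K p c) := by rw [rot2]
      _ = ∑ c, γ c * (∑ p, J a p * K p c) := by
          refine scg1 fun c => ?_
          rw [pull1]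
      _ = γ a := by
          simp only [hJK]
          simp [mul_ite, ite_mul, Finset.sum_ite_eq, Finset.mem_univ]
  -- C4 : contraction of Ab with S
  have C4 : ∀ a, ∑ i, ∑ j, Ab i j * S a i j = -γ a := by
    intro a
    have main : ∑ i, ∑ j, Ab i j * (-S a i j) = γ a := by
      calc ∑ i, ∑ j, Ab i j * (-S a i j)
          = ∑ i, ∑ j, ∑ p, ∑ b, ∑ c, Ab i j * (J a p * H p b c * J b i * J c j) := by
            refine scg2 fun i j => ?_
            rw [hS, neg_neg, pull3]
        _ = ∑ p, ∑ b, ∑ c, ∑ i, ∑ j, Ab i j * (J a p * H p b c * J b i * J c j) := by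
            rw [rot5, rot5]
        _ = ∑ p, ∑ b, ∑ c, (J a p * H p b c) * (∑ i, ∑ j, Ab i j * (J b i * J c j)) := by
            refine scg3 fun p b c => ?_
            rw [pull2]
            exact scg2 fun i j => by ring
        _ = ∑ p, ∑ b, ∑ c, (J a p * H p b c) * Gi b c := by simp only [C1]
        _ = ∑ p, J a p * hf p := by
            refine scg1 fun p => ?_
            rw [hhf, pull2]
            exact scg2 fun b c => by ring
        _ = γ a := γstep a
    calc ∑ i, ∑ j, Ab i j * S a i j
        = -∑ i, ∑ j, Ab i j * (-S a i j) := by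
          rw [← neg2]
          exact scg2 fun i j => by ring
      _ = -γ a := by rw [main]
  -- X3 : the doubly-contracted second-derivative term
  have X3 : ∀ l, ∑ b, ∑ i, K i b * S b i l = -(∑ p, ∑ c, ∑ d, H p c d * J c p * J d l) := by
    intro l
    have main : ∑ b, ∑ i, K i b * (-S b i l) = ∑ p, ∑ c, ∑ d, H p c d * J c p * J d l := by
      calc ∑ b, ∑ i, K i b * (-S b i l)
          = ∑ b, ∑ i, ∑ p, ∑ c, ∑ d, K i b * (J b p * H p c d * J c i * J d l) := by
            refine scg2 fun b i => ?_
            rw [hS, neg_neg, pull3]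
        _ = ∑ p, ∑ c, ∑ d, ∑ b, ∑ i, K i b * (J b p * H p c d * J c i * J d l) := by
            rw [rot5, rot5]
        _ = ∑ p, ∑ c, ∑ d, ∑ i, ∑ b, K i b * (J b p * H p c d * J c i * J d l) := by
            refine scg3 fun p c d => rot2 _
        _ = ∑ p, ∑ c, ∑ d, ∑ i, (H p c d * J c i * J d l) * (∑ b, K i b * J b p) := by
            refine scg3 fun p c d => scg1 fun i => ?_
            rw [pull1]
            exact scg1 fun b => by ring
        _ = ∑ p, ∑ c, ∑ d, ∑ i, (H p c d * J c i * J d l) * (if i = p then 1 else 0) := by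
            simp only [hKJ]
        _ = ∑ p, ∑ c, ∑ d, H p c d * J c p * J d l := by
            refine scg3 fun p c d => ?_
            simp [mul_ite, ite_mul, Finset.sum_ite_eq', Finset.mem_univ]
    calc ∑ b, ∑ i, K i b * S b i l
        = -∑ b, ∑ i, K i b * (-S b i l) := by
          rw [← neg2]
          exact scg2 fun b i => by ring
      _ = -(∑ p, ∑ c, ∑ d, H p c d * J c p * J d l) := by rw [main]
  -- Q1 pieces
  have Q1A : ∀ l, ∑ i, ∑ j, Ab i j * (∑ a, ∑ b, ∑ c, Dg c a b * J c i * J a j * J b l)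
      = ∑ a, ∑ b, ∑ c, Dg c a b * Gi c a * J b l := by
    intro l
    calc ∑ i, ∑ j, Ab i j * (∑ a, ∑ b, ∑ c, Dg c a b * J c i * J a j * J b l)
        = ∑ i, ∑ j, ∑ a, ∑ b, ∑ c, Ab i j * (Dg c a b * J c i * J a j * J b l) := by
          exact scg2 fun i j => pull3 _ _
      _ = ∑ a, ∑ b, ∑ c, ∑ i, ∑ j, Ab i j * (Dg c a b * J c i * J a j * J b l) := by
          rw [rot5, rot5]
      _ = ∑ a, ∑ b, ∑ c, (Dg c a b * J b l) * (∑ i, ∑ j, Ab i j * (J c i * J a j)) := by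
          refine scg3 fun a b c => ?_
          rw [pull2]
          exact scg2 fun i j => by ring
      _ = ∑ a, ∑ b, ∑ c, (Dg c a b * J b l) * Gi c a := by simp only [C1]
      _ = ∑ a, ∑ b, ∑ c, Dg c a b * Gi c a * J b l := scg3 fun a b c => by ring
  have Q1B : ∀ l, ∑ i, ∑ j, Ab i j * (∑ a, ∑ b, G a b * S a i j * J b l)
      = -∑ a, ∑ b, G a b * γ a * J b l := by
    intro l
    calc ∑ i, ∑ j, Ab i j * (∑ a, ∑ b, G a b * S a i j * J b l)
        = ∑ i, ∑ j, ∑ a, ∑ b, Ab i j * (G a b * S a i j * J b l) := by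
          exact scg2 fun i j => pull2 _ _
      _ = ∑ a, ∑ b, ∑ i, ∑ j, Ab i j * (G a b * S a i j * J b l) := by rw [rot4, rot4]
      _ = ∑ a, ∑ b, (G a b * J b l) * (∑ i, ∑ j, Ab i j * S a i j) := by
          refine scg2 fun a b => ?_
          rw [pull2]
          exact scg2 fun i j => by ring
      _ = ∑ a, ∑ b, (G a b * J b l) * (-γ a) := by simp only [C4]
      _ = ∑ a, ∑ b, -(G a b * γ a * J b l) := scg2 fun a b => by ring
      _ = -∑ a, ∑ b, G a b * γ a * J b l := neg2 _
  have Q1C : ∀ l, ∑ i, ∑ j, Ab i j * (∑ a, ∑ b, G a b * J a j * S b i l)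
      = -(∑ p, ∑ c, ∑ d, H p c d * J c p * J d l) := by
    intro l
    calc ∑ i, ∑ j, Ab i j * (∑ a, ∑ b, G a b * J a j * S b i l)
        = ∑ i, ∑ j, ∑ a, ∑ b, Ab i j * (G a b * J a j * S b i l) := by
          exact scg2 fun i j => pull2 _ _
      _ = ∑ a, ∑ b, ∑ i, ∑ j, Ab i j * (G a b * J a j * S b i l) := by rw [rot4, rot4]
      _ = ∑ a, ∑ b, ∑ i, (G a b * S b i l) * (∑ j, Ab i j * J a j) := by
          refine scg3 fun a b i => ?_
          rw [pull1]
          exact scg1 fun j => by ring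
      _ = ∑ a, ∑ b, ∑ i, (G a b * S b i l) * (∑ p, K i p * Gi p a) := by simp only [C2]
      _ = ∑ a, ∑ b, ∑ i, ∑ p, (G a b * S b i l) * (K i p * Gi p a) := by
          exact scg3 fun a b i => pull1 _ _
      _ = ∑ b, ∑ i, ∑ p, ∑ a, (G a b * S b i l) * (K i p * Gi p a) := by rw [rot4]
      _ = ∑ b, ∑ i, ∑ p, (S b i l * K i p) * (∑ a, Gi p a * G a b) := by
          refine scg3 fun b i p => ?_
          rw [pull1]
          exact scg1 fun a => by ring
      _ = ∑ b, ∑ i, ∑ p, (S b i l * K i p) * (if p = b then 1 else 0) := by simp only [hGiG]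
      _ = ∑ b, ∑ i, S b i l * K i b := by
          refine scg2 fun b i => ?_
          simp [mul_ite, ite_mul, Finset.sum_ite_eq', Finset.mem_univ]
      _ = ∑ b, ∑ i, K i b * S b i l := scg2 fun b i => by ring
      _ = -(∑ p, ∑ c, ∑ d, H p c d * J c p * J d l) := X3 l
  -- Q3 pieces
  have Q3A : ∀ l, ∑ i, ∑ j, Ab i j * (∑ a, ∑ b, ∑ c, Dg c a b * J c l * J a i * J b j)
      = ∑ a, ∑ b, ∑ c, Dg c a b * J c l * Gi a b := by
    intro l
    calc ∑ i, ∑ j, Ab i j * (∑ a, ∑ b, ∑ c, Dg c a b * J c l * J a i * J b j)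
        = ∑ i, ∑ j, ∑ a, ∑ b, ∑ c, Ab i j * (Dg c a b * J c l * J a i * J b j) := by
          exact scg2 fun i j => pull3 _ _
      _ = ∑ a, ∑ b, ∑ c, ∑ i, ∑ j, Ab i j * (Dg c a b * J c l * J a i * J b j) := by
          rw [rot5, rot5]
      _ = ∑ a, ∑ b, ∑ c, (Dg c a b * J c l) * (∑ i, ∑ j, Ab i j * (J a i * J b j)) := by
          refine scg3 fun a b c => ?_
          rw [pull2]
          exact scg2 fun i j => by ring
      _ = ∑ a, ∑ b, ∑ c, (Dg c a b * J c l) * Gi a b := by simp only [C1]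
      _ = ∑ a, ∑ b, ∑ c, Dg c a b * J c l * Gi a b := scg3 fun a b c => by ring
  have Q3B : ∀ l, ∑ i, ∑ j, Ab i j * (∑ a, ∑ b, G a b * S a l i * J b j)
      = -(∑ p, ∑ c, ∑ d, H p c d * J c p * J d l) := by
    intro l
    calc ∑ i, ∑ j, Ab i j * (∑ a, ∑ b, G a b * S a l i * J b j)
        = ∑ i, ∑ j, ∑ a, ∑ b, Ab i j * (G a b * S a l i * J b j) := by
          exact scg2 fun i j => pull2 _ _
      _ = ∑ a, ∑ b, ∑ i, ∑ j, Ab i j * (G a b * S a l i * J b j) := by rw [rot4, rot4]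
      _ = ∑ a, ∑ b, ∑ i, (G a b * S a l i) * (∑ j, Ab i j * J b j) := by
          refine scg3 fun a b i => ?_
          rw [pull1]
          exact scg1 fun j => by ring
      _ = ∑ a, ∑ b, ∑ i, (G a b * S a l i) * (∑ p, K i p * Gi p b) := by simp only [C2]
      _ = ∑ a, ∑ b, ∑ i, ∑ p, (G a b * S a l i) * (K i p * Gi p b) := by
          exact scg3 fun a b i => pull1 _ _
      _ = ∑ a, ∑ i, ∑ p, ∑ b, (G a b * S a l i) * (K i p * Gi p b) := by
          exact scg1 fun a => rot3 _
      _ = ∑ a, ∑ i, ∑ p, (S a l i * K i p) * (∑ b, Gi p b * G b a) := by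
          refine scg3 fun a i p => ?_
          rw [pull1]
          exact scg1 fun b => by rw [hGsym a b]; ring
      _ = ∑ a, ∑ i, ∑ p, (S a l i * K i p) * (if p = a then 1 else 0) := by simp only [hGiG]
      _ = ∑ a, ∑ i, S a l i * K i a := by
          refine scg2 fun a i => ?_
          simp [mul_ite, ite_mul, Finset.sum_ite_eq', Finset.mem_univ]
      _ = ∑ a, ∑ i, K i a * S a i l := scg2 fun a i => by rw [hSsym a l i]; ring
      _ = -(∑ p, ∑ c, ∑ d, H p c d * J c p * J d l) := X3 l
  have Q3C : ∀ l, ∑ i, ∑ j, Ab i j * (∑ a, ∑ b, G a b * J a i * S b l j)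
      = -(∑ p, ∑ c, ∑ d, H p c d * J c p * J d l) := by
    intro l
    calc ∑ i, ∑ j, Ab i j * (∑ a, ∑ b, G a b * J a i * S b l j)
        = ∑ i, ∑ j, ∑ a, ∑ b, Ab i j * (G a b * J a i * S b l j) := by
          exact scg2 fun i j => pull2 _ _
      _ = ∑ a, ∑ b, ∑ i, ∑ j, Ab i j * (G a b * J a i * S b l j) := by rw [rot4, rot4]
      _ = ∑ a, ∑ b, ∑ j, ∑ i, Ab i j * (G a b * J a i * S b l j) := by
          exact scg2 fun a b => rot2 _
      _ = ∑ a, ∑ b, ∑ j, (G a b * S b l j) * (∑ i, Ab i j * J a i) := by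
          refine scg3 fun a b j => ?_
          rw [pull1]
          exact scg1 fun i => by ring
      _ = ∑ a, ∑ b, ∑ j, (G a b * S b l j) * (∑ q, K j q * Gi q a) := by simp only [C2']
      _ = ∑ a, ∑ b, ∑ j, ∑ q, (G a b * S b l j) * (K j q * Gi q a) := by
          exact scg3 fun a b j => pull1 _ _
      _ = ∑ b, ∑ j, ∑ q, ∑ a, (G a b * S b l j) * (K j q * Gi q a) := by rw [rot4]
      _ = ∑ b, ∑ j, ∑ q, (S b l j * K j q) * (∑ a, Gi q a * G a b) := by
          refine scg3 fun b j q => ?_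
          rw [pull1]
          exact scg1 fun a => by ring
      _ = ∑ b, ∑ j, ∑ q, (S b l j * K j q) * (if q = b then 1 else 0) := by simp only [hGiG]
      _ = ∑ b, ∑ j, S b l j * K j b := by
          refine scg2 fun b j => ?_
          simp [mul_ite, ite_mul, Finset.sum_ite_eq', Finset.mem_univ]
      _ = ∑ b, ∑ j, K j b * S b j l := scg2 fun b j => by rw [hSsym b l j]; ring
      _ = -(∑ p, ∑ c, ∑ d, H p c d * J c p * J d l) := X3 l
  -- contraction of G with γ
  have hGγ : ∀ bb, ∑ a, G a bb * γ a
      = (1/2) * ∑ d, ∑ e, Gi d e * (Dg d e bb + Dg e d bb - Dg bb d e) := by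
    intro bb
    calc ∑ a, G a bb * γ a
        = ∑ a, ∑ d, ∑ e, G a bb * (Gi d e * Γ a d e) := by
          refine scg1 fun a => ?_
          rw [hγ, pull2]
      _ = ∑ d, ∑ e, ∑ a, G a bb * (Gi d e * Γ a d e) := by rw [rot3]
      _ = ∑ d, ∑ e, ∑ a, ∑ m, (1/2) * (Gi d e * (Dg d e m + Dg e d m - Dg m d e)) * (G a bb * Gi a m) := by
          refine scg3 fun d e a => ?_
          rw [hΓ]
          simp only [Finset.mul_sum]
          exact scg1 fun m => by ring
      _ = ∑ d, ∑ e, ∑ m, ∑ a, (1/2) * (Gi d e * (Dg d e m + Dg e d m - Dg m d e)) * (G a bb * Gi a m) := by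
          exact scg2 fun d e => rot2 _
      _ = ∑ d, ∑ e, ∑ m, (1/2) * (Gi d e * (Dg d e m + Dg e d m - Dg m d e)) * (∑ a, G bb a * Gi a m) := by
          refine scg3 fun d e m => ?_
          rw [pull1]
          exact scg1 fun a => by rw [hGsym a bb]
      _ = ∑ d, ∑ e, ∑ m, (1/2) * (Gi d e * (Dg d e m + Dg e d m - Dg m d e)) * (if bb = m then 1 else 0) := by
          simp only [hGGi]
      _ = ∑ d, ∑ e, (1/2) * (Gi d e * (Dg d e bb + Dg e d bb - Dg bb d e)) := by
          refine scg2 fun d e => ?_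
          simp [mul_ite, ite_mul, Finset.sum_ite_eq, Finset.mem_univ]
      _ = (1/2) * ∑ d, ∑ e, Gi d e * (Dg d e bb + Dg e d bb - Dg bb d e) := (pull2 _ _).symm
  -- swap identity for the Gi-Dg contraction
  have hswap : ∀ b, (∑ d, ∑ e, Gi d e * Dg d e b) = ∑ d, ∑ e, Gi d e * Dg e d b := by
    intro b
    rw [rot2]
    exact scg2 fun e d => by rw [hGisym]
  -- rewrite the three l-indexed quantities in factored form
  have t1 : ∀ l, (∑ a, ∑ b, ∑ c, Dg c a b * Gi c a * J b l)
      = ∑ b, J b l * (∑ d, ∑ e, Gi d e * Dg d e b) := by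
    intro l
    rw [rot3]
    refine scg1 fun b => ?_
    rw [pull2]
    exact scg2 fun c a => by ring
  have t3 : ∀ l, (∑ a, ∑ b, ∑ c, Dg c a b * J c l * Gi a b)
      = ∑ b, J b l * (∑ d, ∑ e, Gi d e * Dg b d e) := by
    intro l
    rw [rot3, rot3]
    refine scg1 fun c => ?_
    rw [pull2]
    exact scg2 fun a b => by ring
  have tb : ∀ l, (∑ a, ∑ b, G a b * γ a * J b l)
      = ∑ b, J b l * ((1/2) * ∑ d, ∑ e, Gi d e * (Dg d e b + Dg e d b - Dg b d e)) := by
    intro l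
    rw [rot2]
    refine scg1 fun b => ?_
    rw [← hGγ b, pull1]
    exact scg1 fun a => by ring
  -- the vanishing of the contracted quantity for each l
  have hE : ∀ l, ∑ i, ∑ j, Ab i j * (Db i j l + Db j i l - Db l i j) = 0 := by
    intro l
    have v1 : ∑ i, ∑ j, Ab i j * Db i j l
        = (∑ a, ∑ b, ∑ c, Dg c a b * Gi c a * J b l)
          + (-∑ a, ∑ b, G a b * γ a * J b l)
          + (-(∑ p, ∑ c, ∑ d, H p c d * J c p * J d l)) := by
      calc ∑ i, ∑ j, Ab i j * Db i j l
          = ∑ i, ∑ j, (Ab i j * (∑ a, ∑ b, ∑ c, Dg c a b * J c i * J a j * J b l)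
              + Ab i j * (∑ a, ∑ b, G a b * S a i j * J b l)
              + Ab i j * (∑ a, ∑ b, G a b * J a j * S b i l)) := by
            refine scg2 fun i j => ?_
            rw [hDb]; ring
        _ = (∑ i, ∑ j, Ab i j * (∑ a, ∑ b, ∑ c, Dg c a b * J c i * J a j * J b l))
              + (∑ i, ∑ j, Ab i j * (∑ a, ∑ b, G a b * S a i j * J b l))
              + (∑ i, ∑ j, Ab i j * (∑ a, ∑ b, G a b * J a j * S b i l)) := by
            simp only [Finset.sum_add_distrib]
        _ = _ := by rw [Q1A l, Q1B l, Q1C l]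
    have v3 : ∑ i, ∑ j, Ab i j * Db l i j
        = (∑ a, ∑ b, ∑ c, Dg c a b * J c l * Gi a b)
          + (-(∑ p, ∑ c, ∑ d, H p c d * J c p * J d l))
          + (-(∑ p, ∑ c, ∑ d, H p c d * J c p * J d l)) := by
      calc ∑ i, ∑ j, Ab i j * Db l i j
          = ∑ i, ∑ j, (Ab i j * (∑ a, ∑ b, ∑ c, Dg c a b * J c l * J a i * J b j)
              + Ab i j * (∑ a, ∑ b, G a b * S a l i * J b j)
              + Ab i j * (∑ a, ∑ b, G a b * J a i * S b l j)) := by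
            refine scg2 fun i j => ?_
            rw [hDb]; ring
        _ = (∑ i, ∑ j, Ab i j * (∑ a, ∑ b, ∑ c, Dg c a b * J c l * J a i * J b j))
              + (∑ i, ∑ j, Ab i j * (∑ a, ∑ b, G a b * S a l i * J b j))
              + (∑ i, ∑ j, Ab i j * (∑ a, ∑ b, G a b * J a i * S b l j)) := by
            simp only [Finset.sum_add_distrib]
        _ = _ := by rw [Q3A l, Q3B l, Q3C l]
    have hQ2 : ∑ i, ∑ j, Ab i j * Db j i l = ∑ i, ∑ j, Ab i j * Db i j l := by
      rw [rot2]
      exact scg2 fun i j => by rw [hAbsym j i]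
    have split : ∑ i, ∑ j, Ab i j * (Db i j l + Db j i l - Db l i j)
        = (∑ i, ∑ j, Ab i j * Db i j l) + (∑ i, ∑ j, Ab i j * Db j i l)
          - (∑ i, ∑ j, Ab i j * Db l i j) := by
      simp only [mul_add, mul_sub, Finset.sum_add_distrib, Finset.sum_sub_distrib]
    rw [split, hQ2, v1, v3]
    have key : 2 * (∑ a, ∑ b, ∑ c, Dg c a b * Gi c a * J b l)
        - (∑ a, ∑ b, ∑ c, Dg c a b * J c l * Gi a b)
        - 2 * (∑ a, ∑ b, G a b * γ a * J b l) = 0 := by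
      rw [t1 l, t3 l, tb l, pull1, pull1]
      rw [← Finset.sum_sub_distrib, ← Finset.sum_sub_distrib]
      rw [Finset.sum_eq_zero]
      intro b _
      have expand : ∑ d, ∑ e, Gi d e * (Dg d e b + Dg e d b - Dg b d e)
          = (∑ d, ∑ e, Gi d e * Dg d e b) + (∑ d, ∑ e, Gi d e * Dg e d b)
            - (∑ d, ∑ e, Gi d e * Dg b d e) := by
        simp only [mul_add, mul_sub, Finset.sum_add_distrib, Finset.sum_sub_distrib]
      rw [expand, ← hswap b]
      ring
    linarith [key]
  -- final assembly
  calc ∑ i, ∑ j, Ab i j * ((1/2) * ∑ l, Ab k l * (Db i j l + Db j i l - Db l i j))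
      = ∑ i, ∑ j, ∑ l, (1/2) * (Ab k l * (Ab i j * (Db i j l + Db j i l - Db l i j))) := by
        refine scg2 fun i j => ?_
        simp only [Finset.mul_sum]
        exact scg1 fun l => by ring
    _ = ∑ l, ∑ i, ∑ j, (1/2) * (Ab k l * (Ab i j * (Db i j l + Db j i l - Db l i j))) := by
        rw [rot3, rot3]
    _ = ∑ l, (1/2) * (Ab k l * (∑ i, ∑ j, Ab i j * (Db i j l + Db j i l - Db l i j))) := by
        refine scg1 fun l => ?_
        refine Eq.symm ?_
        calc (1/2) * (Ab k l * (∑ i, ∑ j, Ab i j * (Db i j l + Db j i l - Db l i j)))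
            = (1/2) * (∑ i, ∑ j, Ab k l * (Ab i j * (Db i j l + Db j i l - Db l i j))) := by
              rw [pull2]
          _ = ∑ i, ∑ j, (1/2) * (Ab k l * (Ab i j * (Db i j l + Db j i l - Db l i j))) := by
              rw [pull2]
    _ = ∑ l, (1/2) * (Ab k l * 0) := by
        exact scg1 fun l => by rw [hE l]
    _ = 0 := by simp

/-- **Computational step of Lemma 3.1**: if every component of the coordinate
transformation `φ` satisfies the elliptic equation
`-Σ g^{kl} ∂²x̄^i/∂x^k∂x^l + Σ g^{kl} Γ^j_{kl} ∂x̄^i/∂x^j = 0` on `U`, then the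
transformed metric has vanishing contracted Christoffel symbols on `φ(U)`. -/
theorem harmonic_coordinates_kill_contracted_christoffel (n : ℕ) (hn : 2 ≤ n)
    (U : Set (Fin n → ℝ)) (hU : IsOpen U)
    (g : (Fin n → ℝ) → Matrix (Fin n) (Fin n) ℝ)
    (hgsmooth : ∀ i j, ContDiffOn ℝ (⊤ : ℕ∞) (fun x => g x i j) U)
    (hgpos : ∀ x ∈ U, (g x).PosDef)
    (φ ψ : (Fin n → ℝ) → (Fin n → ℝ))
    (hφsmooth : ∀ i : Fin n, ContDiffOn ℝ (⊤ : ℕ∞) (fun x => φ x i) U)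
    (hopen : IsOpen (φ '' U))
    (hψsmooth : ∀ i : Fin n, ContDiffOn ℝ (⊤ : ℕ∞) (fun z => ψ z i) (φ '' U))
    (hleft : ∀ x ∈ U, ψ (φ x) = x) (hright : ∀ z ∈ φ '' U, φ (ψ z) = z)
    (hharmonic : ∀ x ∈ U, ∀ i : Fin n,
      -(∑ k, ∑ l, (g x)⁻¹ k l * pd k (fun w => pd l (fun v => φ v i) w) x)
        + ∑ k, ∑ l, ∑ j, (g x)⁻¹ k l * chris g j k l x * pd j (fun v => φ v i) x = 0) :
    ∀ z ∈ φ '' U, ∀ k : Fin n,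
      ∑ i, ∑ j, (pullMetric ψ g z)⁻¹ i j * chris (pullMetric ψ g) k i j z = 0 := by
  intro z hz k
  obtain ⟨x, hxU, rfl⟩ := hz
  have hzU : φ x ∈ φ '' U := ⟨x, hxU, rfl⟩
  have hψz : ψ (φ x) = x := hleft x hxU
  -- pointwise smoothness
  have hgc : ∀ a b, ContDiffAt ℝ (⊤:ℕ∞) (fun y => g y a b) x :=
    fun a b => (hgsmooth a b).contDiffAt (hU.mem_nhds hxU)
  have hφc : ∀ (y) (_ : y ∈ U) (i : Fin n), ContDiffAt ℝ (⊤:ℕ∞) (fun w => φ w i) y :=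
    fun y hy i => (hφsmooth i).contDiffAt (hU.mem_nhds hy)
  have hψcg : ∀ (w) (_ : w ∈ φ '' U) (a : Fin n), ContDiffAt ℝ (⊤:ℕ∞) (fun v => ψ v a) w :=
    fun w hw a => (hψsmooth a).contDiffAt (hopen.mem_nhds hw)
  have hφd : ∀ (y) (_ : y ∈ U), DifferentiableAt ℝ φ y :=
    fun y hy => differentiableAt_pi.mpr fun i => dat (hφc y hy i)
  have hψd : ∀ (w) (_ : w ∈ φ '' U), DifferentiableAt ℝ ψ w :=
    fun w hw => differentiableAt_pi.mpr fun a => dat (hψcg w hw a)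
  -- general Jacobian identities
  have hJKg : ∀ (y) (_ : y ∈ U) (a p : Fin n),
      ∑ i, pd i (fun w => ψ w a) (φ y) * pd p (fun w => φ w i) y
        = if a = p then (1:ℝ) else 0 := by
    intro y hy a p
    have hyim : φ y ∈ φ '' U := ⟨y, hy, rfl⟩
    have hcomp := pd_comp (i := p) (f := fun v => ψ v a) (ψ := φ) (x := y)
      (hφd y hy) (dat (hψcg (φ y) hyim a))
    rw [← hcomp]
    have heq : (fun w => ψ (φ w) a) =ᶠ[nhds y] (fun w => w a) :=
      Filter.eventuallyEq_of_mem (hU.mem_nhds hy) (fun w hw => by simp [hleft w hw])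
    rw [pd_congr heq, pd_proj]
  have hKJg : ∀ (w) (_ : w ∈ φ '' U) (i j : Fin n),
      ∑ a, pd a (fun v => φ v i) (ψ w) * pd j (fun v => ψ v a) w
        = if i = j then (1:ℝ) else 0 := by
    intro w hw i j
    have hψw : ψ w ∈ U := by obtain ⟨y, hy, rfl⟩ := hw; rw [hleft y hy]; exact hy
    have hcomp := pd_comp (i := j) (f := fun v => φ v i) (ψ := ψ) (x := w)
      (hψd w hw) (dat (hφc (ψ w) hψw i))
    rw [← hcomp]
    have heq : (fun v => φ (ψ v) i) =ᶠ[nhds w] (fun v => v i) :=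
      Filter.eventuallyEq_of_mem (hopen.mem_nhds hw) (fun v hv => by simp [hright v hv])
    rw [pd_congr heq, pd_proj]
  -- specialized Jacobian identities at x
  have F_JK : ∀ a p : Fin n,
      ∑ i, pd i (fun w => ψ w a) (φ x) * pd p (fun w => φ w i) x
        = if a = p then (1:ℝ) else 0 := hJKg x hxU
  have F_KJ : ∀ i j : Fin n,
      ∑ a, pd a (fun v => φ v i) x * pd j (fun v => ψ v a) (φ x)
        = if i = j then (1:ℝ) else 0 := by
    intro i j
    have h := hKJg (φ x) hzU i j
    rwa [hψz] at h
  -- metric symmetry and inverse identities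
  have hdet : IsUnit (g x).det := isUnit_iff_ne_zero.mpr (ne_of_gt (hgpos x hxU).det_pos)
  have F_GGi : ∀ a b : Fin n, ∑ c, g x a c * (g x)⁻¹ c b = if a = b then (1:ℝ) else 0 := by
    intro a b
    have h := congrFun (congrFun (Matrix.mul_nonsing_inv (g x) hdet) a) b
    rwa [Matrix.mul_apply, Matrix.one_apply] at h
  have F_GiG : ∀ a b : Fin n, ∑ c, (g x)⁻¹ a c * g x c b = if a = b then (1:ℝ) else 0 := by
    intro a b
    have h := congrFun (congrFun (Matrix.nonsing_inv_mul (g x) hdet) a) b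
    rwa [Matrix.mul_apply, Matrix.one_apply] at h
  have F_Gsym : ∀ a b : Fin n, g x a b = g x b a := by
    intro a b
    have h := (hgpos x hxU).isHermitian.apply a b
    simpa using h.symm
  have F_Gisym : ∀ a b : Fin n, (g x)⁻¹ a b = (g x)⁻¹ b a := by
    intro a b
    have htr : (g x).transpose = g x := Matrix.ext fun a b => by
      rw [Matrix.transpose_apply]; exact F_Gsym b a
    have h2 : ((g x)⁻¹).transpose = (g x)⁻¹ := by
      rw [Matrix.transpose_nonsing_inv, htr]
    calc (g x)⁻¹ a b = ((g x)⁻¹).transpose b a := rfl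
      _ = (g x)⁻¹ b a := by rw [h2]
  -- symmetry of second derivatives
  have F_Ssym : ∀ a i j : Fin n,
      pd i (fun w => pd j (fun v => ψ v a) w) (φ x)
        = pd j (fun w => pd i (fun v => ψ v a) w) (φ x) :=
    fun a i j => pd_pd_symm (hψcg (φ x) hzU a) i j
  have F_Hsym : ∀ p a b : Fin n,
      pd a (fun w => pd b (fun v => φ v p) w) x
        = pd b (fun w => pd a (fun v => φ v p) w) x :=
    fun p a b => pd_pd_symm (hφc x hxU p) a b
  -- differentiability of first-derivative functions
  have dJf : ∀ (a i : Fin n), DifferentiableAt ℝ (fun w => pd i (fun v => ψ v a) w) (φ x) :=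
    fun a i => dat (cdat_pd (hψcg (φ x) hzU a) i)
  have dKf : ∀ (p a : Fin n),
      DifferentiableAt ℝ (fun w => pd a (fun v => φ v p) (ψ w)) (φ x) := by
    intro p a
    have h1 : DifferentiableAt ℝ (pd a (fun v => φ v p)) (ψ (φ x)) := by
      rw [hψz]; exact dat (cdat_pd (hφc x hxU p) a)
    exact h1.comp _ (hψd _ hzU)
  -- differentiated inverse identity
  have E1 : ∀ p i j : Fin n,
      ∑ a, ((∑ b, pd b (fun w => pd a (fun v => φ v p) w) x * pd j (fun w => ψ w b) (φ x))
          * pd i (fun w => ψ w a) (φ x)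
        + pd a (fun v => φ v p) x * pd j (fun w => pd i (fun v => ψ v a) w) (φ x)) = 0 := by
    intro p i j
    have hW : (fun w => ∑ a, pd a (fun v => φ v p) (ψ w) * pd i (fun v => ψ v a) w)
        =ᶠ[nhds (φ x)] (fun _ => if p = i then (1:ℝ) else 0) :=
      Filter.eventuallyEq_of_mem (hopen.mem_nhds hzU) (fun w hw => hKJg w hw p i)
    have h0 : pd j (fun w => ∑ a, pd a (fun v => φ v p) (ψ w) * pd i (fun v => ψ v a) w) (φ x) = 0 := by
      rw [pd_congr hW, pd_const]
    rw [pd_sum (fun a _ => (dKf p a).fun_mul (dJf a i))] at h0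
    rw [← h0]
    refine (scg1 fun a => ?_).symm
    rw [pd_mul (dKf p a) (dJf a i)]
    have hcomp := pd_comp (i := j) (f := pd a (fun v => φ v p)) (ψ := ψ) (x := φ x)
      (hψd _ hzU) (by rw [hψz]; exact dat (cdat_pd (hφc x hxU p) a))
    rw [hcomp, hψz]
  -- the second-derivative transformation law
  have e2 : ∀ p i j : Fin n,
      ∑ a, pd a (fun v => φ v p) x * pd i (fun w => pd j (fun v => ψ v a) w) (φ x)
        = -(∑ a, ∑ b, pd b (fun w => pd a (fun v => φ v p) w) x
            * pd i (fun w => ψ w b) (φ x) * pd j (fun w => ψ w a) (φ x)) := by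
    intro p i j
    have h := E1 p j i
    rw [Finset.sum_add_distrib] at h
    have hfirst : ∑ a, ((∑ b, pd b (fun w => pd a (fun v => φ v p) w) x
          * pd i (fun w => ψ w b) (φ x)) * pd j (fun w => ψ w a) (φ x))
        = ∑ a, ∑ b, pd b (fun w => pd a (fun v => φ v p) w) x
            * pd i (fun w => ψ w b) (φ x) * pd j (fun w => ψ w a) (φ x) :=
      scg1 fun a => by rw [Finset.sum_mul]
    rw [hfirst] at h
    linarith
  have e3 : ∀ (e i j : Fin n),
      ∑ p, pd p (fun w => ψ w e) (φ x) * (∑ a, pd a (fun v => φ v p) x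
        * pd i (fun w => pd j (fun v => ψ v a) w) (φ x))
      = pd i (fun w => pd j (fun v => ψ v e) w) (φ x) := by
    intro e i j
    calc ∑ p, pd p (fun w => ψ w e) (φ x) * (∑ a, pd a (fun v => φ v p) x
          * pd i (fun w => pd j (fun v => ψ v a) w) (φ x))
        = ∑ p, ∑ a, pd p (fun w => ψ w e) (φ x) * (pd a (fun v => φ v p) x
            * pd i (fun w => pd j (fun v => ψ v a) w) (φ x)) := scg1 fun p => pull1 _ _
      _ = ∑ a, ∑ p, pd p (fun w => ψ w e) (φ x) * (pd a (fun v => φ v p) x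
            * pd i (fun w => pd j (fun v => ψ v a) w) (φ x)) := rot2 _
      _ = ∑ a, pd i (fun w => pd j (fun v => ψ v a) w) (φ x)
            * (∑ p, pd p (fun w => ψ w e) (φ x) * pd a (fun v => φ v p) x) := by
          refine scg1 fun a => ?_
          rw [pull1]
          exact scg1 fun p => by ring
      _ = ∑ a, pd i (fun w => pd j (fun v => ψ v a) w) (φ x)
            * (if e = a then (1:ℝ) else 0) := by
          refine scg1 fun a => ?_
          rw [F_JK e a]
      _ = pd i (fun w => pd j (fun v => ψ v e) w) (φ x) := by
          simp [mul_ite, Finset.sum_ite_eq, Finset.mem_univ]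
  have F_S : ∀ (e i j : Fin n),
      pd i (fun w => pd j (fun v => ψ v e) w) (φ x)
        = -∑ p, ∑ b, ∑ c, pd p (fun w => ψ w e) (φ x)
            * pd b (fun w => pd c (fun v => φ v p) w) x
            * pd i (fun w => ψ w b) (φ x) * pd j (fun w => ψ w c) (φ x) := by
    intro e i j
    calc pd i (fun w => pd j (fun v => ψ v e) w) (φ x)
        = ∑ p, pd p (fun w => ψ w e) (φ x) * (∑ a, pd a (fun v => φ v p) x
            * pd i (fun w => pd j (fun v => ψ v a) w) (φ x)) := (e3 e i j).symm
      _ = ∑ p, pd p (fun w => ψ w e) (φ x)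
            * (-(∑ a, ∑ b, pd b (fun w => pd a (fun v => φ v p) w) x
              * pd i (fun w => ψ w b) (φ x) * pd j (fun w => ψ w a) (φ x))) := by
          refine scg1 fun p => ?_
          rw [e2 p i j]
      _ = ∑ p, -(pd p (fun w => ψ w e) (φ x)
            * (∑ a, ∑ b, pd b (fun w => pd a (fun v => φ v p) w) x
              * pd i (fun w => ψ w b) (φ x) * pd j (fun w => ψ w a) (φ x))) :=
          scg1 fun p => by ring
      _ = -∑ p, pd p (fun w => ψ w e) (φ x)
            * (∑ a, ∑ b, pd b (fun w => pd a (fun v => φ v p) w) x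
              * pd i (fun w => ψ w b) (φ x) * pd j (fun w => ψ w a) (φ x)) := by
          simp
      _ = -∑ p, ∑ b, ∑ c, pd p (fun w => ψ w e) (φ x)
            * pd b (fun w => pd c (fun v => φ v p) w) x
            * pd i (fun w => ψ w b) (φ x) * pd j (fun w => ψ w c) (φ x) := by
          refine congrArg Neg.neg ?_
          refine scg1 fun p => ?_
          rw [pull2, rot2]
          exact scg2 fun b c => by ring
  have F_harm : ∀ p : Fin n,
      ∑ a, ∑ b, (g x)⁻¹ a b * pd a (fun w => pd b (fun v => φ v p) w) x
        = ∑ a, ∑ b, ∑ c, (g x)⁻¹ a b * chris g c a b x * pd c (fun v => φ v p) x := by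
    intro p
    have h := hharmonic x hxU p
    linarith
  -- the inverse of the pulled-back metric
  have F_Ab : ∀ i j : Fin n, (pullMetric ψ g (φ x))⁻¹ i j
      = ∑ a, ∑ b, pd a (fun v => φ v i) x * (g x)⁻¹ a b * pd b (fun v => φ v j) x := by
    have hJmKm : (Matrix.of fun a i => pd i (fun w => ψ w a) (φ x))
        * (Matrix.of fun i a => pd a (fun v => φ v i) x) = 1 := by
      ext a p
      rw [Matrix.mul_apply, Matrix.one_apply]
      simpa using F_JK a p
    have hKmJm : (Matrix.of fun i a => pd a (fun v => φ v i) x)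
        * (Matrix.of fun a i => pd i (fun w => ψ w a) (φ x)) = 1 := by
      ext i j
      rw [Matrix.mul_apply, Matrix.one_apply]
      simpa using F_KJ i j
    have hpull : pullMetric ψ g (φ x)
        = (Matrix.of fun a i => pd i (fun w => ψ w a) (φ x)).transpose * g x
          * (Matrix.of fun a i => pd i (fun w => ψ w a) (φ x)) := by
      ext i j
      simp only [pullMetric, Matrix.of_apply, hψz, Matrix.mul_apply, Matrix.transpose_apply,
        Finset.sum_mul]
      rw [rot2]
      exact scg2 fun b a => by ring
    have hinv : (pullMetric ψ g (φ x))⁻¹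
        = (Matrix.of fun i a => pd a (fun v => φ v i) x) * (g x)⁻¹
          * (Matrix.of fun i a => pd a (fun v => φ v i) x).transpose := by
      rw [hpull]
      apply Matrix.inv_eq_right_inv
      calc ((Matrix.of fun a i => pd i (fun w => ψ w a) (φ x)).transpose * g x
              * (Matrix.of fun a i => pd i (fun w => ψ w a) (φ x)))
            * ((Matrix.of fun i a => pd a (fun v => φ v i) x) * (g x)⁻¹
              * (Matrix.of fun i a => pd a (fun v => φ v i) x).transpose)
          = (Matrix.of fun a i => pd i (fun w => ψ w a) (φ x)).transpose * (g x
            * (((Matrix.of fun a i => pd i (fun w => ψ w a) (φ x))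
              * (Matrix.of fun i a => pd a (fun v => φ v i) x))
              * ((g x)⁻¹ * (Matrix.of fun i a => pd a (fun v => φ v i) x).transpose))) := by
            simp only [Matrix.mul_assoc]
        _ = (Matrix.of fun a i => pd i (fun w => ψ w a) (φ x)).transpose
            * (Matrix.of fun i a => pd a (fun v => φ v i) x).transpose := by
            rw [hJmKm, Matrix.one_mul, ← Matrix.mul_assoc (g x) ((g x)⁻¹) _,
              Matrix.mul_nonsing_inv _ hdet, Matrix.one_mul]
        _ = 1 := by
            rw [← Matrix.transpose_mul, hKmJm, Matrix.transpose_one]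
    intro i j
    rw [hinv, Matrix.mul_apply]
    calc ∑ b, ((Matrix.of fun i a => pd a (fun v => φ v i) x) * (g x)⁻¹) i b
          * ((Matrix.of fun i a => pd a (fun v => φ v i) x).transpose) b j
        = ∑ b, ∑ a, (Matrix.of fun i a => pd a (fun v => φ v i) x) i a * (g x)⁻¹ a b
            * ((Matrix.of fun i a => pd a (fun v => φ v i) x).transpose) b j := by
          refine scg1 fun b => ?_
          rw [Matrix.mul_apply, Finset.sum_mul]
      _ = ∑ a, ∑ b, (Matrix.of fun i a => pd a (fun v => φ v i) x) i a * (g x)⁻¹ a b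
            * ((Matrix.of fun i a => pd a (fun v => φ v i) x).transpose) b j := rot2 _
      _ = ∑ a, ∑ b, pd a (fun v => φ v i) x * (g x)⁻¹ a b * pd b (fun v => φ v j) x := by
          exact scg2 fun a b => by simp only [Matrix.transpose_apply, Matrix.of_apply]
  -- the derivative of the pulled-back metric
  have hdg : ∀ a b : Fin n, DifferentiableAt ℝ (fun w => g (ψ w) a b) (φ x) := by
    intro a b
    have h1 : DifferentiableAt ℝ (fun y => g y a b) (ψ (φ x)) := by
      rw [hψz]; exact dat (hgc a b)
    exact h1.comp _ (hψd _ hzU)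
  have F_Db : ∀ i j l : Fin n, pd i (fun w => pullMetric ψ g w j l) (φ x)
      = (∑ a, ∑ b, ∑ c, pd c (fun y => g y a b) x * pd i (fun w => ψ w c) (φ x)
          * pd j (fun w => ψ w a) (φ x) * pd l (fun w => ψ w b) (φ x))
        + (∑ a, ∑ b, g x a b * pd i (fun w => pd j (fun v => ψ v a) w) (φ x)
            * pd l (fun w => ψ w b) (φ x))
        + (∑ a, ∑ b, g x a b * pd j (fun w => ψ w a) (φ x)
            * pd i (fun w => pd l (fun v => ψ v b) w) (φ x)) := by
    intro i j l
    have hfun : (fun w => pullMetric ψ g w j l)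
        = fun w => ∑ a, ∑ b, g (ψ w) a b * pd j (fun v => ψ v a) w * pd l (fun v => ψ v b) w := rfl
    rw [hfun]
    rw [pd_sum (fun a _ => DifferentiableAt.fun_sum
      (fun b _ => ((hdg a b).fun_mul (dJf a j)).fun_mul (dJf b l)))]
    have hstep : ∀ a : Fin n,
        pd i (fun w => ∑ b, g (ψ w) a b * pd j (fun v => ψ v a) w * pd l (fun v => ψ v b) w) (φ x)
          = ∑ b, pd i (fun w => g (ψ w) a b * pd j (fun v => ψ v a) w * pd l (fun v => ψ v b) w) (φ x) :=
      fun a => pd_sum (fun b _ => ((hdg a b).fun_mul (dJf a j)).fun_mul (dJf b l))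
    rw [scg1 hstep]
    have hterm : ∀ a b : Fin n,
        pd i (fun w => g (ψ w) a b * pd j (fun v => ψ v a) w * pd l (fun v => ψ v b) w) (φ x)
          = (∑ c, pd c (fun y => g y a b) x * pd i (fun w => ψ w c) (φ x)
              * pd j (fun w => ψ w a) (φ x) * pd l (fun w => ψ w b) (φ x))
            + g x a b * pd i (fun w => pd j (fun v => ψ v a) w) (φ x)
              * pd l (fun w => ψ w b) (φ x)
            + g x a b * pd j (fun w => ψ w a) (φ x)
              * pd i (fun w => pd l (fun v => ψ v b) w) (φ x) := by
      intro a b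
      rw [pd_mul ((hdg a b).fun_mul (dJf a j)) (dJf b l), pd_mul (hdg a b) (dJf a j)]
      have hcomp := pd_comp (i := i) (f := fun y => g y a b) (ψ := ψ) (x := φ x)
        (hψd _ hzU) (by rw [hψz]; exact dat (hgc a b))
      rw [hcomp, hψz, Finset.sum_mul, add_mul, Finset.sum_mul]
    rw [scg1 fun a => scg1 fun b => hterm a b]
    simp only [Finset.sum_add_distrib]
  exact alg
    (J := fun a i => pd i (fun w => ψ w a) (φ x))
    (K := fun i a => pd a (fun w => φ w i) x)
    (G := fun a b => g x a b) (Gi := fun a b => (g x)⁻¹ a b)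
    (Dg := fun c a b => pd c (fun y => g y a b) x)
    (H := fun p a b => pd a (fun w => pd b (fun v => φ v p) w) x)
    (S := fun a i j => pd i (fun w => pd j (fun v => ψ v a) w) (φ x))
    (Db := fun i j l => pd i (fun w => pullMetric ψ g w j l) (φ x))
    (Γ := fun c a b => chris g c a b x)
    (Ab := fun i j => (pullMetric ψ g (φ x))⁻¹ i j)
    (γ := fun c => ∑ a, ∑ b, (g x)⁻¹ a b * chris g c a b x)
    F_JK (fun i j => F_KJ i j) F_GGi F_GiG F_Gsym F_Gisym F_Ssym F_S
    (fun c a b => rfl) F_harm F_Ab (fun c => rfl) F_Db k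
end
end

section
/- Spatial vacuum Einstein equations for a metric with orthogonal time-axis (equation (6.4)): let g(x,t) be a smooth family of Riemannian metrics in local coordinates on U ⊆ ℝⁿ and let ĝ be the Lorentzian metric −dt² + g_{ij} dx^i dx^j on ℝ × U. Then at any point (x,t) and for given indices i, j, the spatial Ricci component of ĝ vanishes, R̂_{ij}(x,t) = 0, if and only if ∂²g_{ij}/∂t² = −2R_{ij} − (1/2) Σ_{p,q} g^{pq} (∂g_{ij}/∂t)(∂g_{pq}/∂t) + Σ_{p,q} g^{pq} (∂g_{ip}/∂t)(∂g_{jq}/∂t) at (x,t), where R_{ij} is the Ricci tensor of g(·,t). In particular, the hyperbolic geometric flow ∂²g_{ij}/∂t² = −2R_{ij} consists of the leading (second-order) terms of these vacuum Einstein equations. -/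
noncomputable section

open scoped BigOperators

/-- The product Lorentzian metric `-dt² + g_{ij}(x,t) dx^i dx^j` on `ℝ × ℝⁿ`, with
coordinates `z = (x⁰ = t, x¹, …, xⁿ)` indexed by `Fin (n+1)` (index `0` is time). -/
def lorentz {n : ℕ} (g : ℝ → (Fin n → ℝ) → Matrix (Fin n) (Fin n) ℝ) :
    (Fin (n + 1) → ℝ) → Matrix (Fin (n + 1)) (Fin (n + 1)) ℝ :=
  fun z => Matrix.of fun α β =>
    Fin.cases (Fin.cases (-1 : ℝ) (fun _ => 0) β)
      (fun i => Fin.cases (0 : ℝ) (fun j => g (z 0) (fun m => z m.succ) i j) β) α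

namespace HGF
variable {n : ℕ}

def L (n : ℕ) : (Fin (n+1) → ℝ) →L[ℝ] ℝ × (Fin n → ℝ) :=
  (ContinuousLinearMap.proj 0).prod (ContinuousLinearMap.pi fun m => ContinuousLinearMap.proj m.succ)

lemma L_apply (z : Fin (n+1) → ℝ) : L n z = (z 0, fun m => z m.succ) := rfl

lemma L_single_zero : L n (Pi.single 0 1) = (1, 0) := by
  rw [L_apply]
  refine Prod.ext ?_ ?_
  · simp
  · funext m
    simp [Pi.single_apply, (Fin.succ_ne_zero m)]

lemma L_single_succ (c : Fin n) : L n (Pi.single c.succ 1) = (0, Pi.single c 1) := by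
  rw [L_apply]
  refine Prod.ext ?_ ?_
  · simp [Pi.single_apply, (Fin.succ_ne_zero c).symm]
  · funext m
    simp [Pi.single_apply, Fin.succ_inj]

lemma pd_const (c : Fin n) (a : ℝ) (x : Fin n → ℝ) : pd c (fun _ => a) x = 0 := by
  simp [pd]

lemma pd_congr {f f' : (Fin n → ℝ) → ℝ} {x : Fin n → ℝ} (h : f =ᶠ[nhds x] f') (c : Fin n) :
    pd c f x = pd c f' x := by
  unfold pd; rw [h.fderiv_eq]

lemma pd_comp_L {f : ℝ × (Fin n → ℝ) → ℝ} {z : Fin (n+1) → ℝ}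
    (hf : DifferentiableAt ℝ f (L n z)) (c : Fin (n+1)) :
    pd c (fun w => f (L n w)) z = fderiv ℝ f (L n z) (L n (Pi.single c 1)) := by
  unfold pd
  rw [show (fun w => f (L n w)) = f ∘ (L n) from rfl,
    fderiv_comp z hf (L n).differentiableAt, (L n).fderiv]
  rfl

lemma fderiv_dir_fst {f : ℝ × (Fin n → ℝ) → ℝ} {t : ℝ} {x : Fin n → ℝ}
    (hf : DifferentiableAt ℝ f (t, x)) :
    fderiv ℝ f (t, x) (1, 0) = deriv (fun s => f (s, x)) t := by
  have h : HasDerivAt (fun s : ℝ => (s, x)) ((1 : ℝ), (0 : Fin n → ℝ)) t :=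
    HasDerivAt.prodMk (hasDerivAt_id t) (hasDerivAt_const t x)
  have h2 : HasDerivAt (fun s => f (s, x)) (fderiv ℝ f (t, x) (1, 0)) t :=
    hf.hasFDerivAt.comp_hasDerivAt t h
  rw [h2.deriv]

lemma fderiv_dir_snd {f : ℝ × (Fin n → ℝ) → ℝ} {t : ℝ} {x : Fin n → ℝ}
    (hf : DifferentiableAt ℝ f (t, x)) (c : Fin n) :
    fderiv ℝ f (t, x) (0, Pi.single c 1) = pd c (fun y => f (t, y)) x := by
  have h : HasFDerivAt (fun y : Fin n → ℝ => (t, y))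
      (ContinuousLinearMap.inr ℝ ℝ (Fin n → ℝ)) x :=
    HasFDerivAt.prodMk (hasFDerivAt_const t x) (hasFDerivAt_id x)
  have h2 : HasFDerivAt (fun y => f (t, y))
      ((fderiv ℝ f (t, x)).comp (ContinuousLinearMap.inr ℝ ℝ (Fin n → ℝ))) x :=
    hf.hasFDerivAt.comp x h
  unfold pd
  rw [h2.fderiv]
  rfl


lemma one_le_top' : ((⊤ : ℕ∞) : WithTop ℕ∞) ≠ 0 := by simp

lemma contDiff_det {E : Type*} [NormedAddCommGroup E] [NormedSpace ℝ E]
    {M : E → Matrix (Fin n) (Fin n) ℝ} (h : ∀ a b, ContDiff ℝ (⊤ : ℕ∞) fun q => M q a b) :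
    ContDiff ℝ (⊤ : ℕ∞) fun q => (M q).det := by
  have : (fun q => (M q).det) =
      fun q => ∑ σ : Equiv.Perm (Fin n), (Equiv.Perm.sign σ : ℝ) * ∏ i, M q (σ i) i := by
    funext q; rw [Matrix.det_apply']
  rw [this]
  exact ContDiff.sum fun σ _ =>
    contDiff_const.mul (contDiff_prod fun i _ => h (σ i) i)

section blocks
variable (g : ℝ → (Fin n → ℝ) → Matrix (Fin n) (Fin n) ℝ)

def F (a b : Fin n) : ℝ × (Fin n → ℝ) → ℝ := fun q => g q.1 q.2 a b
def Gif (a b : Fin n) : ℝ × (Fin n → ℝ) → ℝ := fun q => (g q.1 q.2)⁻¹ a b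
def Tf (a b : Fin n) : ℝ × (Fin n → ℝ) → ℝ := fun q => deriv (fun s => g s q.2 a b) q.1
def Spf (c a b : Fin n) : ℝ × (Fin n → ℝ) → ℝ := fun q => pd c (fun y => g q.1 y a b) q.2
def Cs (k a b : Fin n) : ℝ × (Fin n → ℝ) → ℝ := fun q => chris (g q.1) k a b q.2

variable (hsmooth : ∀ i j, ContDiff ℝ (⊤ : ℕ∞) (fun q : ℝ × (Fin n → ℝ) => g q.1 q.2 i j))

include hsmooth

lemma Tf_eq (a b : Fin n) (q : ℝ × (Fin n → ℝ)) :
    Tf g a b q = fderiv ℝ (F g a b) q (1, 0) := by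
  have hd : DifferentiableAt ℝ (F g a b) (q.1, q.2) := by
    rw [Prod.mk.eta]; exact ((hsmooth a b).differentiable one_le_top').differentiableAt
  have h : HasDerivAt (fun s : ℝ => (s, q.2)) ((1 : ℝ), (0 : Fin n → ℝ)) q.1 :=
    HasDerivAt.prodMk (hasDerivAt_id q.1) (hasDerivAt_const q.1 q.2)
  have h2 : HasDerivAt (fun s => F g a b (s, q.2)) (fderiv ℝ (F g a b) (q.1, q.2) (1, 0)) q.1 := by
    have := hd.hasFDerivAt.comp_hasDerivAt q.1 h; exact this
  rw [Prod.mk.eta] at h2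
  show deriv (fun s => F g a b (s, q.2)) q.1 = _
  exact h2.deriv

lemma Spf_eq (c a b : Fin n) (q : ℝ × (Fin n → ℝ)) :
    Spf g c a b q = fderiv ℝ (F g a b) q (0, Pi.single c 1) := by
  have hd : DifferentiableAt ℝ (F g a b) (q.1, q.2) := by
    rw [Prod.mk.eta]; exact ((hsmooth a b).differentiable one_le_top').differentiableAt
  have h : HasFDerivAt (fun y : Fin n → ℝ => (q.1, y))
      (ContinuousLinearMap.inr ℝ ℝ (Fin n → ℝ)) q.2 :=
    HasFDerivAt.prodMk (hasFDerivAt_const q.1 q.2) (hasFDerivAt_id q.2)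
  have h2 : HasFDerivAt (fun y => F g a b (q.1, y))
      ((fderiv ℝ (F g a b) (q.1, q.2)).comp (ContinuousLinearMap.inr ℝ ℝ (Fin n → ℝ))) q.2 :=
    hd.hasFDerivAt.comp q.2 h
  rw [Prod.mk.eta] at h2
  show fderiv ℝ (fun y => F g a b (q.1, y)) q.2 (Pi.single c 1) = _
  rw [h2.fderiv]
  rfl

lemma contDiff_Tf (a b : Fin n) : ContDiff ℝ (⊤ : ℕ∞) (Tf g a b) := by
  have : Tf g a b = fun q => fderiv ℝ (F g a b) q (1, 0) := funext (Tf_eq g hsmooth a b)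
  rw [this]
  exact ((hsmooth a b).fderiv_right (le_refl _)).clm_apply contDiff_const

lemma contDiff_Spf (c a b : Fin n) : ContDiff ℝ (⊤ : ℕ∞) (Spf g c a b) := by
  have : Spf g c a b = fun q => fderiv ℝ (F g a b) q (0, Pi.single c 1) :=
    funext (Spf_eq g hsmooth c a b)
  rw [this]
  exact ((hsmooth a b).fderiv_right (le_refl _)).clm_apply contDiff_const

lemma contDiffAt_Gif (a b : Fin n) (q : ℝ × (Fin n → ℝ)) (hq : (g q.1 q.2).det ≠ 0) :
    ContDiffAt ℝ (⊤ : ℕ∞) (Gif g a b) q := by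
  have hGeq : Gif g a b = fun q' =>
      ((g q'.1 q'.2).det)⁻¹ * (g q'.1 q'.2).adjugate a b := by
    funext q'
    rw [Gif, Matrix.inv_def, Matrix.smul_apply, Ring.inverse_eq_inv', smul_eq_mul]
  rw [hGeq]
  have hdet : ContDiff ℝ (⊤ : ℕ∞) fun q' : ℝ × (Fin n → ℝ) => (g q'.1 q'.2).det :=
    contDiff_det fun a' b' => hsmooth a' b'
  have hadj : ContDiff ℝ (⊤ : ℕ∞) fun q' : ℝ × (Fin n → ℝ) => (g q'.1 q'.2).adjugate a b := by
    have : (fun q' : ℝ × (Fin n → ℝ) => (g q'.1 q'.2).adjugate a b) =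
        fun q' => ((g q'.1 q'.2).updateRow b (Pi.single a 1)).det := by
      funext q'; rw [Matrix.adjugate_apply]
    rw [this]
    refine contDiff_det fun a' b' => ?_
    by_cases h : a' = b
    · subst h
      simp only [Matrix.updateRow_self]
      exact contDiff_const
    · simp only [Matrix.updateRow_ne h]
      exact hsmooth a' b'
  exact (hdet.contDiffAt.inv hq).mul hadj.contDiffAt

omit hsmooth in
lemma Cs_eq (k a b : Fin n) : Cs g k a b = fun q =>
    (1 / 2) * ∑ l, Gif g k l q * (Spf g a b l q + Spf g b a l q - Spf g l a b q) := rfl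

lemma differentiableAt_Cs (k a b : Fin n) (q : ℝ × (Fin n → ℝ)) (hq : (g q.1 q.2).det ≠ 0) :
    DifferentiableAt ℝ (Cs g k a b) q := by
  rw [Cs_eq]
  refine (DifferentiableAt.fun_sum fun l _ => DifferentiableAt.mul ?_ ?_).const_mul _
  · exact ((contDiffAt_Gif g hsmooth k l q hq).differentiableAt one_le_top')
  · exact (((contDiff_Spf g hsmooth a b l).differentiable one_le_top' q).add
      ((contDiff_Spf g hsmooth b a l).differentiable one_le_top' q)).sub
      ((contDiff_Spf g hsmooth l a b).differentiable one_le_top' q)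

omit hsmooth in
lemma Cs_fixed_t (k a b : Fin n) (t : ℝ) :
    (fun y => Cs g k a b (t, y)) = chris (g t) k a b := rfl

end blocks

section lorentzlemmas
variable (g : ℝ → (Fin n → ℝ) → Matrix (Fin n) (Fin n) ℝ)

lemma lorentz_00 (z : Fin (n+1) → ℝ) : lorentz g z 0 0 = -1 := by
  simp [lorentz]

lemma lorentz_0s (z : Fin (n+1) → ℝ) (b : Fin n) : lorentz g z 0 b.succ = 0 := by
  simp [lorentz]

lemma lorentz_s0 (z : Fin (n+1) → ℝ) (a : Fin n) : lorentz g z a.succ 0 = 0 := by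
  simp [lorentz]

lemma lorentz_ss (z : Fin (n+1) → ℝ) (a b : Fin n) :
    lorentz g z a.succ b.succ = F g a b (L n z) := by
  simp [lorentz, F, L_apply]

def lorentzInv (z : Fin (n+1) → ℝ) : Matrix (Fin (n+1)) (Fin (n+1)) ℝ :=
  Matrix.of fun α β =>
    Fin.cases (Fin.cases (-1 : ℝ) (fun _ => 0) β)
      (fun i => Fin.cases (0 : ℝ) (fun j => (g (z 0) (fun m => z m.succ))⁻¹ i j) β) α

lemma lorentzInv_00 (z : Fin (n+1) → ℝ) : lorentzInv g z 0 0 = -1 := by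
  simp [lorentzInv]

lemma lorentzInv_0s (z : Fin (n+1) → ℝ) (b : Fin n) : lorentzInv g z 0 b.succ = 0 := by
  simp [lorentzInv]

lemma lorentzInv_s0 (z : Fin (n+1) → ℝ) (a : Fin n) : lorentzInv g z a.succ 0 = 0 := by
  simp [lorentzInv]

lemma lorentzInv_ss (z : Fin (n+1) → ℝ) (a b : Fin n) :
    lorentzInv g z a.succ b.succ = Gif g a b (L n z) := by
  simp [lorentzInv, Gif, L_apply]

lemma lorentz_inv_eq (z : Fin (n+1) → ℝ)
    (hd : IsUnit (g (z 0) (fun m => z m.succ)).det) :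
    (lorentz g z)⁻¹ = lorentzInv g z := by
  apply Matrix.inv_eq_right_inv
  ext α β
  rw [Matrix.mul_apply, Fin.sum_univ_succ]
  refine Fin.cases ?_ (fun a => ?_) α <;> refine Fin.cases ?_ (fun b => ?_) β
  · simp [lorentz_00, lorentzInv_00, lorentz_0s, lorentzInv_s0, Matrix.one_apply]
  · simp [lorentz_00, lorentzInv_0s, lorentz_0s, lorentzInv_ss, Matrix.one_apply,
      (Fin.succ_ne_zero b).symm]
  · simp [lorentz_s0, lorentzInv_00, lorentz_ss, lorentzInv_s0, Matrix.one_apply,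
      Fin.succ_ne_zero a]
  · have hmul : ∑ l : Fin n, g (z 0) (fun m => z m.succ) a l *
        (g (z 0) (fun m => z m.succ))⁻¹ l b =
        (1 : Matrix (Fin n) (Fin n) ℝ) a b := by
      rw [← Matrix.mul_apply, Matrix.mul_nonsing_inv _ hd]
    simp only [lorentz_s0, lorentzInv_00, lorentz_ss, lorentzInv_ss, mul_neg, mul_zero,
      zero_mul, zero_add]
    simp only [show ∀ l : Fin n, F g a l (L n z) = g (z 0) (fun m => z m.succ) a l
      from fun l => rfl,
      show ∀ l : Fin n, Gif g l b (L n z) = (g (z 0) (fun m => z m.succ))⁻¹ l b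
      from fun l => rfl]
    rw [hmul, Matrix.one_apply, Matrix.one_apply]
    simp [Fin.succ_inj]

end lorentzlemmas
section chrisvals
variable (g : ℝ → (Fin n → ℝ) → Matrix (Fin n) (Fin n) ℝ)
variable (hsmooth : ∀ i j, ContDiff ℝ (⊤ : ℕ∞) (fun q : ℝ × (Fin n → ℝ) => g q.1 q.2 i j))

omit hsmooth in
lemma pd_lorentz_00 (c : Fin (n+1)) (z : Fin (n+1) → ℝ) :
    pd c (fun w => lorentz g w 0 0) z = 0 := by
  rw [show (fun w => lorentz g w 0 0) = fun _ => (-1 : ℝ) from funext fun w => lorentz_00 g w]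
  exact pd_const c _ z

omit hsmooth in
lemma pd_lorentz_0s (c : Fin (n+1)) (z : Fin (n+1) → ℝ) (b : Fin n) :
    pd c (fun w => lorentz g w 0 b.succ) z = 0 := by
  rw [show (fun w => lorentz g w 0 b.succ) = fun _ => (0 : ℝ)
    from funext fun w => lorentz_0s g w b]
  exact pd_const c _ z

omit hsmooth in
lemma pd_lorentz_s0 (c : Fin (n+1)) (z : Fin (n+1) → ℝ) (a : Fin n) :
    pd c (fun w => lorentz g w a.succ 0) z = 0 := by
  rw [show (fun w => lorentz g w a.succ 0) = fun _ => (0 : ℝ)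
    from funext fun w => lorentz_s0 g w a]
  exact pd_const c _ z

include hsmooth

lemma pd0_lorentz_ss (z : Fin (n+1) → ℝ) (a b : Fin n) :
    pd 0 (fun w => lorentz g w a.succ b.succ) z = Tf g a b (L n z) := by
  rw [show (fun w => lorentz g w a.succ b.succ) = fun w => F g a b (L n w)
    from funext fun w => lorentz_ss g w a b]
  have hdf : DifferentiableAt ℝ (F g a b) (L n z) :=
    ((hsmooth a b).differentiable one_le_top').differentiableAt
  rw [pd_comp_L hdf, L_single_zero, ← Tf_eq g hsmooth]

lemma pds_lorentz_ss (c : Fin n) (z : Fin (n+1) → ℝ) (a b : Fin n) :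
    pd c.succ (fun w => lorentz g w a.succ b.succ) z = Spf g c a b (L n z) := by
  rw [show (fun w => lorentz g w a.succ b.succ) = fun w => F g a b (L n w)
    from funext fun w => lorentz_ss g w a b]
  have hdf : DifferentiableAt ℝ (F g a b) (L n z) :=
    ((hsmooth a b).differentiable one_le_top').differentiableAt
  rw [pd_comp_L hdf, L_single_succ, ← Spf_eq g hsmooth]

variable (z : Fin (n+1) → ℝ) (hd : IsUnit (g (z 0) (fun m => z m.succ)).det)

include hd

omit hsmooth in
lemma chrisL_0_00 : chris (lorentz g) 0 0 0 z = 0 := by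
  unfold chris
  rw [lorentz_inv_eq g z hd, Fin.sum_univ_succ]
  simp [lorentzInv_00, lorentzInv_0s, pd_lorentz_00, pd_lorentz_0s, pd_lorentz_s0]

omit hsmooth in
lemma chrisL_0_0s (b : Fin n) : chris (lorentz g) 0 0 b.succ z = 0 := by
  unfold chris
  rw [lorentz_inv_eq g z hd, Fin.sum_univ_succ]
  simp [lorentzInv_00, lorentzInv_0s, pd_lorentz_00, pd_lorentz_0s, pd_lorentz_s0]

omit hsmooth in
lemma chrisL_0_s0 (b : Fin n) : chris (lorentz g) 0 b.succ 0 z = 0 := by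
  unfold chris
  rw [lorentz_inv_eq g z hd, Fin.sum_univ_succ]
  simp [lorentzInv_00, lorentzInv_0s, pd_lorentz_00, pd_lorentz_0s, pd_lorentz_s0]

lemma chrisL_0_ss (a b : Fin n) :
    chris (lorentz g) 0 a.succ b.succ z = (1 / 2) * Tf g a b (L n z) := by
  unfold chris
  rw [lorentz_inv_eq g z hd, Fin.sum_univ_succ]
  simp [lorentzInv_00, lorentzInv_0s, pd_lorentz_0s, pd_lorentz_s0,
    pd0_lorentz_ss g hsmooth]

omit hsmooth in
lemma chrisL_s_00 (k : Fin n) : chris (lorentz g) k.succ 0 0 z = 0 := by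
  unfold chris
  rw [lorentz_inv_eq g z hd, Fin.sum_univ_succ]
  simp [lorentzInv_s0, lorentzInv_ss, pd_lorentz_00, pd_lorentz_0s, pd_lorentz_s0]

lemma chrisL_s_0s (k b : Fin n) :
    chris (lorentz g) k.succ 0 b.succ z =
      (1 / 2) * ∑ l, Gif g k l (L n z) * Tf g b l (L n z) := by
  unfold chris
  rw [lorentz_inv_eq g z hd, Fin.sum_univ_succ]
  simp [lorentzInv_s0, lorentzInv_ss, pd_lorentz_00, pd_lorentz_0s, pd_lorentz_s0,
    pd0_lorentz_ss g hsmooth]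

lemma chrisL_s_s0 (k b : Fin n) :
    chris (lorentz g) k.succ b.succ 0 z =
      (1 / 2) * ∑ l, Gif g k l (L n z) * Tf g b l (L n z) := by
  unfold chris
  rw [lorentz_inv_eq g z hd, Fin.sum_univ_succ]
  simp [lorentzInv_s0, lorentzInv_ss, pd_lorentz_00, pd_lorentz_0s, pd_lorentz_s0,
    pd0_lorentz_ss g hsmooth]

lemma chrisL_s_ss (k a b : Fin n) :
    chris (lorentz g) k.succ a.succ b.succ z = Cs g k a b (L n z) := by
  unfold chris
  rw [lorentz_inv_eq g z hd, Fin.sum_univ_succ, Cs_eq]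
  simp [lorentzInv_s0, lorentzInv_ss, pd_lorentz_s0,
    pds_lorentz_ss g hsmooth]

end chrisvals
end HGF

namespace HGF
variable {n : ℕ}

lemma sum_collapse_right (f : Fin n → ℝ) (d : Fin n) :
    (∑ c, f c * (1 : Matrix (Fin n) (Fin n) ℝ) c d) = f d := by
  simp [Matrix.one_apply, mul_ite, mul_one, mul_zero, Finset.sum_ite_eq', Finset.sum_ite_eq]

section derivs
variable (g : ℝ → (Fin n → ℝ) → Matrix (Fin n) (Fin n) ℝ)
variable (hsmooth : ∀ i j, ContDiff ℝ (⊤ : ℕ∞) (fun q : ℝ × (Fin n → ℝ) => g q.1 q.2 i j))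

def Gkf (k b : Fin n) : ℝ × (Fin n → ℝ) → ℝ :=
  fun q => (1 / 2) * ∑ l, Gif g k l q * Tf g b l q

variable {t : ℝ} {x : Fin n → ℝ}
variable (hpd : ∀ s : ℝ, (g s x).PosDef)

omit hsmooth in
include hpd in
lemma det_ne (s : ℝ) : (g s x).det ≠ 0 := ne_of_gt (hpd s).det_pos

include hsmooth hpd

lemma diffAt_Gif_slice (a b : Fin n) (s : ℝ) :
    DifferentiableAt ℝ (fun r => Gif g a b (r, x)) s := by
  have h1 : DifferentiableAt ℝ (Gif g a b) (s, x) :=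
    (contDiffAt_Gif g hsmooth a b (s, x) (det_ne g hpd s)).differentiableAt one_le_top'
  have h2 : DifferentiableAt ℝ (fun r : ℝ => (r, x)) s :=
    (differentiable_id.prodMk (differentiable_const x)).differentiableAt
  exact DifferentiableAt.comp s h1 h2

omit hpd in
lemma diffAt_Tf_slice (a b : Fin n) (s : ℝ) :
    DifferentiableAt ℝ (fun r => Tf g a b (r, x)) s := by
  have h1 : DifferentiableAt ℝ (Tf g a b) (s, x) :=
    ((contDiff_Tf g hsmooth a b).differentiable one_le_top').differentiableAt
  have h2 : DifferentiableAt ℝ (fun r : ℝ => (r, x)) s :=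
    (differentiable_id.prodMk (differentiable_const x)).differentiableAt
  exact DifferentiableAt.comp s h1 h2

lemma deriv_Gkf_slice (k b : Fin n) :
    deriv (fun s => Gkf g k b (s, x)) t =
      (1 / 2) * ∑ l, (deriv (fun s => Gif g k l (s, x)) t * Tf g b l (t, x) +
        Gif g k l (t, x) * deriv (fun s => Tf g b l (s, x)) t) := by
  have h : HasDerivAt (fun s => ∑ l, Gif g k l (s, x) * Tf g b l (s, x))
      (∑ l, (deriv (fun s => Gif g k l (s, x)) t * Tf g b l (t, x) +
        Gif g k l (t, x) * deriv (fun s => Tf g b l (s, x)) t)) t := by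
    refine HasDerivAt.fun_sum fun l _ => ?_
    exact ((diffAt_Gif_slice g hsmooth hpd k l t).hasDerivAt).mul
      ((diffAt_Tf_slice g hsmooth b l t).hasDerivAt)
  have h2 : HasDerivAt (fun s => Gkf g k b (s, x))
      ((1 / 2) * ∑ l, (deriv (fun s => Gif g k l (s, x)) t * Tf g b l (t, x) +
        Gif g k l (t, x) * deriv (fun s => Tf g b l (s, x)) t)) t := h.const_mul _
  exact h2.deriv

lemma deriv_Gif_slice (a b : Fin n) :
    deriv (fun s => Gif g a b (s, x)) t =
      -∑ c, ∑ d, Gif g a c (t, x) * Tf g c d (t, x) * Gif g d b (t, x) := by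
  have hFslice : ∀ (c b' : Fin n) (s : ℝ),
      HasDerivAt (fun r => F g c b' (r, x)) (Tf g c b' (s, x)) s := fun c b' s => by
    have hd : DifferentiableAt ℝ (fun r => F g c b' (r, x)) s := by
      have h1 : DifferentiableAt ℝ (F g c b') (s, x) :=
        ((hsmooth c b').differentiable one_le_top').differentiableAt
      exact DifferentiableAt.comp s h1
        (((differentiable_id.prodMk (differentiable_const x) :
          Differentiable ℝ (fun r : ℝ => (r, x)))).differentiableAt)
    exact hd.hasDerivAt
  -- key identity from differentiating g⁻¹ g = 1
  have key : ∀ e : Fin n, ∑ c, (deriv (fun s => Gif g a c (s, x)) t * g t x c e +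
      Gif g a c (t, x) * Tf g c e (t, x)) = 0 := by
    intro e
    have h1 : HasDerivAt (fun s => ∑ c, Gif g a c (s, x) * F g c e (s, x))
        (∑ c, (deriv (fun s => Gif g a c (s, x)) t * g t x c e +
          Gif g a c (t, x) * Tf g c e (t, x))) t := by
      refine HasDerivAt.fun_sum fun c _ => ?_
      exact ((diffAt_Gif_slice g hsmooth hpd a c t).hasDerivAt).mul (hFslice c e t)
    have h2 : (fun s => ∑ c, Gif g a c (s, x) * F g c e (s, x)) =
        fun _ => (1 : Matrix (Fin n) (Fin n) ℝ) a e := by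
      funext s
      have := Matrix.nonsing_inv_mul (g s x) ((hpd s).det_pos.ne'.isUnit)
      calc ∑ c, Gif g a c (s, x) * F g c e (s, x)
          = ((g s x)⁻¹ * g s x) a e := by rw [Matrix.mul_apply]; rfl
        _ = (1 : Matrix (Fin n) (Fin n) ℝ) a e := by rw [this]
    have h3 : HasDerivAt (fun s => ∑ c, Gif g a c (s, x) * F g c e (s, x)) 0 t := by
      rw [h2]; exact hasDerivAt_const t _
    exact h1.unique h3
  have hGGi : ∀ e : Fin n, (∑ c, g t x e c * Gif g c b (t, x)) =
      (1 : Matrix (Fin n) (Fin n) ℝ) e b := fun e => by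
    rw [show (∑ c, g t x e c * Gif g c b (t, x)) = (g t x * (g t x)⁻¹) e b
      from by rw [Matrix.mul_apply]; rfl,
      Matrix.mul_nonsing_inv _ ((hpd t).det_pos.ne'.isUnit)]
  -- now the algebra
  set GiD : Fin n → ℝ := fun c => deriv (fun s => Gif g a c (s, x)) t with hGiD
  have step1 : GiD b = ∑ e, GiD e * (1 : Matrix (Fin n) (Fin n) ℝ) e b :=
    (sum_collapse_right GiD b).symm
  show GiD b = _
  rw [step1]
  have step2 : ∀ e, (1 : Matrix (Fin n) (Fin n) ℝ) e b = ∑ c, g t x e c * Gif g c b (t, x) :=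
    fun e => (hGGi e).symm
  calc ∑ e, GiD e * (1 : Matrix (Fin n) (Fin n) ℝ) e b
      = ∑ e, GiD e * ∑ c, g t x e c * Gif g c b (t, x) := by
        exact Finset.sum_congr rfl fun e _ => by rw [step2 e]
    _ = ∑ e, ∑ c, (GiD e * g t x e c) * Gif g c b (t, x) := by
        refine Finset.sum_congr rfl fun e _ => ?_
        rw [Finset.mul_sum]
        exact Finset.sum_congr rfl fun c _ => by ring
    _ = ∑ c, (∑ e, GiD e * g t x e c) * Gif g c b (t, x) := by
        rw [Finset.sum_comm]
        exact Finset.sum_congr rfl fun c _ => by rw [Finset.sum_mul]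
    _ = ∑ c, (-(∑ e, Gif g a e (t, x) * Tf g e c (t, x))) * Gif g c b (t, x) := by
        refine Finset.sum_congr rfl fun c _ => ?_
        have hk := key c
        rw [Finset.sum_add_distrib] at hk
        have : ∑ e, GiD e * g t x e c = -(∑ e, Gif g a e (t, x) * Tf g e c (t, x)) := by
          linarith
        rw [this]
    _ = ∑ c, -(∑ e, Gif g a e (t, x) * Tf g e c (t, x) * Gif g c b (t, x)) := by
        refine Finset.sum_congr rfl fun c _ => ?_
        rw [neg_mul, Finset.sum_mul]
    _ = -(∑ c, ∑ e, Gif g a e (t, x) * Tf g e c (t, x) * Gif g c b (t, x)) := by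
        rw [Finset.sum_neg_distrib]
    _ = -∑ c, ∑ d, Gif g a c (t, x) * Tf g c d (t, x) * Gif g d b (t, x) := by
        rw [Finset.sum_comm]

end derivs
end HGF

namespace HGF
variable {n : ℕ}

section pdchris
variable (g : ℝ → (Fin n → ℝ) → Matrix (Fin n) (Fin n) ℝ)
variable (hsmooth : ∀ i j, ContDiff ℝ (⊤ : ℕ∞) (fun q : ℝ × (Fin n → ℝ) => g q.1 q.2 i j))
variable (U : Set (Fin n → ℝ)) (hU : IsOpen U)
variable (hmetric : ∀ t : ℝ, ∀ x ∈ U, (g t x).PosDef)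
variable (z : Fin (n+1) → ℝ) (hz : (fun m => z m.succ) ∈ U)

omit hsmooth hmetric in
include hU hz in
lemma UpV_mem_nhds : {w : Fin (n+1) → ℝ | (fun m => w m.succ) ∈ U} ∈ nhds z := by
  have hopen : IsOpen {w : Fin (n+1) → ℝ | (fun m => w m.succ) ∈ U} :=
    hU.preimage (continuous_pi fun m => continuous_apply m.succ)
  exact hopen.mem_nhds hz

omit hsmooth in
include hmetric in
lemma isUnit_det_of_mem (w : Fin (n+1) → ℝ) (hw : (fun m => w m.succ) ∈ U) :
    IsUnit (g (w 0) (fun m => w m.succ)).det :=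
  ((hmetric (w 0) _ hw).det_pos.ne').isUnit

include hsmooth hU hmetric hz

lemma pd_chrisL_s_00 (c : Fin (n+1)) (k : Fin n) :
    pd c (chris (lorentz g) k.succ 0 0) z = 0 := by
  have hev : chris (lorentz g) k.succ 0 0 =ᶠ[nhds z] fun _ => (0 : ℝ) := by
    filter_upwards [UpV_mem_nhds U hU z hz] with w hw
    exact chrisL_s_00 g w (isUnit_det_of_mem g U hmetric w hw) k
  rw [pd_congr hev c]
  exact pd_const c _ z

lemma pd0_chrisL_s_s0 (k i : Fin n) :
    pd 0 (chris (lorentz g) k.succ i.succ 0) z =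
      deriv (fun s => Gkf g k i (s, fun m => z m.succ)) (z 0) := by
  have hev : chris (lorentz g) k.succ i.succ 0 =ᶠ[nhds z]
      fun w => Gkf g k i (L n w) := by
    filter_upwards [UpV_mem_nhds U hU z hz] with w hw
    exact chrisL_s_s0 g hsmooth w (isUnit_det_of_mem g U hmetric w hw) k i
  rw [pd_congr hev 0]
  have hdf : DifferentiableAt ℝ (Gkf g k i) (L n z) := by
    unfold Gkf
    have h1 : ∀ l : Fin n, DifferentiableAt ℝ
        (fun q' => Gif g k l q' * Tf g i l q') (L n z) := by
      intro l
      refine DifferentiableAt.mul ?_ ?_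
      · refine (contDiffAt_Gif g hsmooth k l (L n z) ?_).differentiableAt one_le_top'
        exact ne_of_gt (hmetric (z 0) _ hz).det_pos
      · exact ((contDiff_Tf g hsmooth i l).differentiable one_le_top').differentiableAt
    exact (DifferentiableAt.fun_sum fun l _ => h1 l).const_mul _
  rw [pd_comp_L hdf, L_single_zero]
  have hdf2 : DifferentiableAt ℝ (Gkf g k i) (z 0, fun m => z m.succ) := hdf
  rw [show L n z = (z 0, fun m => z m.succ) from rfl]
  exact fderiv_dir_fst hdf2

lemma pds_chrisL_s_ss (c : Fin n) (k p q : Fin n) :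
    pd c.succ (chris (lorentz g) k.succ p.succ q.succ) z =
      pd c (chris (g (z 0)) k p q) (fun m => z m.succ) := by
  have hev : chris (lorentz g) k.succ p.succ q.succ =ᶠ[nhds z]
      fun w => Cs g k p q (L n w) := by
    filter_upwards [UpV_mem_nhds U hU z hz] with w hw
    exact chrisL_s_ss g hsmooth w (isUnit_det_of_mem g U hmetric w hw) k p q
  rw [pd_congr hev c.succ]
  have hdf : DifferentiableAt ℝ (Cs g k p q) (L n z) :=
    differentiableAt_Cs g hsmooth k p q (L n z) (ne_of_gt (hmetric (z 0) _ hz).det_pos)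
  rw [pd_comp_L hdf, L_single_succ]
  have hdf2 : DifferentiableAt ℝ (Cs g k p q) (z 0, fun m => z m.succ) := hdf
  rw [show L n z = (z 0, fun m => z m.succ) from rfl]
  rw [fderiv_dir_snd hdf2 c]
  rfl

end pdchris
end HGF

namespace HGF
variable {n : ℕ}

section algebra
variable (GG GI D D2 : Fin n → Fin n → ℝ) (j i : Fin n)
variable (hGGi : ∀ a b, ∑ c, GG a c * GI c b = if a = b then 1 else 0)

include hGGi in
lemma contract (f : Fin n → ℝ) : ∑ q, GG j q * (∑ l, GI q l * f l) = f j := by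
  calc ∑ q, GG j q * (∑ l, GI q l * f l)
      = ∑ q, ∑ l, GG j q * GI q l * f l := by
        refine Finset.sum_congr rfl fun q _ => ?_
        rw [Finset.mul_sum]
        exact Finset.sum_congr rfl fun l _ => by ring
    _ = ∑ l, ∑ q, GG j q * GI q l * f l := Finset.sum_comm
    _ = ∑ l, (∑ q, GG j q * GI q l) * f l := by
        exact Finset.sum_congr rfl fun l _ => (Finset.sum_mul _ _ _).symm
    _ = ∑ l, (if j = l then 1 else 0) * f l := by
        exact Finset.sum_congr rfl fun l _ => by rw [hGGi j l]
    _ = f j := by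
        simp [ite_mul, one_mul, zero_mul, Finset.sum_ite_eq, Finset.sum_ite_eq']

variable (hDsymm : ∀ a b, D a b = D b a) (hGIsymm : ∀ a b, GI a b = GI b a)

include hGGi hDsymm hGIsymm in
lemma algebra_main (RUS : Fin n → Fin n → Fin n → ℝ) :
    (-1) * (∑ q, GG j q *
        (0 - ((1 / 2) * ∑ l, ((-∑ c, ∑ d, GI q c * D c d * GI d l) * D i l +
          GI q l * D2 i l)) +
          ∑ r, (0 - ((1 / 2) * ∑ l, GI q l * D r l) * ((1 / 2) * ∑ l, GI r l * D i l))))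
      + ∑ p, ∑ q, GI p q * ∑ r, GG j r *
          (RUS r p q + (((1 / 2) * ∑ l, GI r l * D i l) * ((1 / 2) * D p q) -
            ((1 / 2) * ∑ l, GI r l * D p l) * ((1 / 2) * D i q)))
    = (∑ p, ∑ q, GI p q * ∑ r, GG j r * RUS r p q)
      + (1 / 2) * D2 i j
      + (1 / 4) * ∑ p, ∑ q, GI p q * D i j * D p q
      - (1 / 2) * ∑ p, ∑ q, GI p q * D i p * D j q := by
  -- canonical quadratic sum
  set S : ℝ := ∑ p, ∑ q, GI p q * D i p * D j q with hS
  -- Term 1: second time derivative collapse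
  have h1 : ∑ q, GG j q * (∑ l, GI q l * D2 i l) = D2 i j :=
    contract GG GI j hGGi (fun l => D2 i l)
  -- Term 2: the GiD * D part
  have h2 : ∑ q, GG j q * (∑ l, (∑ c, ∑ d, GI q c * D c d * GI d l) * D i l) = S := by
    have hstep : ∀ q, (∑ l, (∑ c, ∑ d, GI q c * D c d * GI d l) * D i l)
        = ∑ c, GI q c * (∑ l, ∑ d, D c d * GI d l * D i l) := by
      intro q
      calc ∑ l, (∑ c, ∑ d, GI q c * D c d * GI d l) * D i l
          = ∑ l, ∑ c, (∑ d, GI q c * D c d * GI d l) * D i l := by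
            exact Finset.sum_congr rfl fun l _ => by rw [Finset.sum_mul]
        _ = ∑ c, ∑ l, (∑ d, GI q c * D c d * GI d l) * D i l := Finset.sum_comm
        _ = ∑ c, GI q c * (∑ l, ∑ d, D c d * GI d l * D i l) := by
            refine Finset.sum_congr rfl fun c _ => ?_
            rw [Finset.mul_sum]
            refine Finset.sum_congr rfl fun l _ => ?_
            rw [Finset.sum_mul, Finset.mul_sum]
            exact Finset.sum_congr rfl fun d _ => by ring
    calc ∑ q, GG j q * (∑ l, (∑ c, ∑ d, GI q c * D c d * GI d l) * D i l)
        = ∑ q, GG j q * (∑ c, GI q c * (∑ l, ∑ d, D c d * GI d l * D i l)) := by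
          exact Finset.sum_congr rfl fun q _ => by rw [hstep q]
      _ = ∑ l, ∑ d, D j d * GI d l * D i l :=
          contract GG GI j hGGi (fun c => ∑ l, ∑ d, D c d * GI d l * D i l)
      _ = S := by
          rw [hS]
          refine Finset.sum_congr rfl fun l _ => Finset.sum_congr rfl fun d _ => ?_
          rw [hGIsymm d l]
          ring
  -- Term 3: ΓΓ time part
  have h3 : ∑ q, GG j q * (∑ r, ((1 / 2) * ∑ l, GI q l * D r l) *
      ((1 / 2) * ∑ l, GI r l * D i l)) = (1 / 4) * S := by
    have hstep : ∀ q, (∑ r, ((1 / 2) * ∑ l, GI q l * D r l) *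
        ((1 / 2) * ∑ l, GI r l * D i l))
        = ∑ l, GI q l * ((1 / 4) * ∑ r, D r l * (∑ m, GI r m * D i m)) := by
      intro q
      calc ∑ r, ((1 / 2) * ∑ l, GI q l * D r l) * ((1 / 2) * ∑ l, GI r l * D i l)
          = ∑ r, ∑ l, (GI q l * D r l) * ((1 / 4) * ∑ m, GI r m * D i m) := by
            refine Finset.sum_congr rfl fun r _ => ?_
            calc ((1 / 2) * ∑ l, GI q l * D r l) * ((1 / 2) * ∑ l, GI r l * D i l)
                = (∑ l, GI q l * D r l) * ((1 / 4) * ∑ m, GI r m * D i m) := by ring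
              _ = ∑ l, (GI q l * D r l) * ((1 / 4) * ∑ m, GI r m * D i m) :=
                  Finset.sum_mul _ _ _
        _ = ∑ l, ∑ r, (GI q l * D r l) * ((1 / 4) * ∑ m, GI r m * D i m) :=
            Finset.sum_comm
        _ = ∑ l, GI q l * ((1 / 4) * ∑ r, D r l * (∑ m, GI r m * D i m)) := by
            refine Finset.sum_congr rfl fun l _ => ?_
            calc ∑ r, (GI q l * D r l) * ((1 / 4) * ∑ m, GI r m * D i m)
                = ∑ r, GI q l * ((1 / 4) * (D r l * ∑ m, GI r m * D i m)) :=
                  Finset.sum_congr rfl fun r _ => by ring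
              _ = GI q l * ∑ r, (1 / 4) * (D r l * ∑ m, GI r m * D i m) :=
                  (Finset.mul_sum _ _ _).symm
              _ = GI q l * ((1 / 4) * ∑ r, D r l * (∑ m, GI r m * D i m)) := by
                  rw [← Finset.mul_sum]
    calc ∑ q, GG j q * (∑ r, ((1 / 2) * ∑ l, GI q l * D r l) *
          ((1 / 2) * ∑ l, GI r l * D i l))
        = ∑ q, GG j q * (∑ l, GI q l * ((1 / 4) * ∑ r, D r l * (∑ m, GI r m * D i m))) :=
          Finset.sum_congr rfl fun q _ => by rw [hstep q]
      _ = (1 / 4) * ∑ r, D r j * (∑ m, GI r m * D i m) :=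
          contract GG GI j hGGi (fun l => (1 / 4) * ∑ r, D r l * (∑ m, GI r m * D i m))
      _ = (1 / 4) * S := by
        have hcv : ∑ r, D r j * (∑ m, GI r m * D i m) = S := by
          calc ∑ r, D r j * (∑ m, GI r m * D i m)
              = ∑ r, ∑ m, D r j * (GI r m * D i m) :=
                Finset.sum_congr rfl fun r _ => Finset.mul_sum _ _ _
            _ = ∑ m, ∑ r, D r j * (GI r m * D i m) := Finset.sum_comm
            _ = S := by
                rw [hS]
                refine Finset.sum_congr rfl fun m _ => Finset.sum_congr rfl fun r _ => ?_
                rw [hGIsymm r m, hDsymm r j]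
                ring
        rw [hcv]
  -- Term 4: spatial extra, first piece
  have h4 : ∀ p q : Fin n, ∑ r, GG j r * (((1 / 2) * ∑ l, GI r l * D i l) *
      ((1 / 2) * D p q)) = (1 / 4) * (D i j * D p q) := by
    intro p q
    calc ∑ r, GG j r * (((1 / 2) * ∑ l, GI r l * D i l) * ((1 / 2) * D p q))
        = ∑ r, GG j r * (∑ l, GI r l * ((1 / 4) * (D i l * D p q))) := by
          refine Finset.sum_congr rfl fun r _ => ?_
          congr 1
          calc ((1 / 2) * ∑ l, GI r l * D i l) * ((1 / 2) * D p q)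
              = (∑ l, GI r l * D i l) * ((1 / 4) * D p q) := by ring
            _ = ∑ l, (GI r l * D i l) * ((1 / 4) * D p q) := Finset.sum_mul _ _ _
            _ = ∑ l, GI r l * ((1 / 4) * (D i l * D p q)) :=
                Finset.sum_congr rfl fun l _ => by ring
      _ = (1 / 4) * (D i j * D p q) :=
          contract GG GI j hGGi (fun l => (1 / 4) * (D i l * D p q))
  -- Term 5: spatial extra, second piece
  have h5 : ∀ p q : Fin n, ∑ r, GG j r * (((1 / 2) * ∑ l, GI r l * D p l) *
      ((1 / 2) * D i q)) = (1 / 4) * (D p j * D i q) := by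
    intro p q
    calc ∑ r, GG j r * (((1 / 2) * ∑ l, GI r l * D p l) * ((1 / 2) * D i q))
        = ∑ r, GG j r * (∑ l, GI r l * ((1 / 4) * (D p l * D i q))) := by
          refine Finset.sum_congr rfl fun r _ => ?_
          congr 1
          calc ((1 / 2) * ∑ l, GI r l * D p l) * ((1 / 2) * D i q)
              = (∑ l, GI r l * D p l) * ((1 / 4) * D i q) := by ring
            _ = ∑ l, (GI r l * D p l) * ((1 / 4) * D i q) := Finset.sum_mul _ _ _
            _ = ∑ l, GI r l * ((1 / 4) * (D p l * D i q)) :=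
                Finset.sum_congr rfl fun l _ => by ring
      _ = (1 / 4) * (D p j * D i q) :=
          contract GG GI j hGGi (fun l => (1 / 4) * (D p l * D i q))
  -- spatial chunk
  have hB : ∑ p, ∑ q, GI p q * ∑ r, GG j r *
      (RUS r p q + (((1 / 2) * ∑ l, GI r l * D i l) * ((1 / 2) * D p q) -
        ((1 / 2) * ∑ l, GI r l * D p l) * ((1 / 2) * D i q)))
      = (∑ p, ∑ q, GI p q * ∑ r, GG j r * RUS r p q)
        + (1 / 4) * (∑ p, ∑ q, GI p q * D i j * D p q)
        - (1 / 4) * S := by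
    have hsplit : ∀ p q : Fin n, GI p q * ∑ r, GG j r *
        (RUS r p q + (((1 / 2) * ∑ l, GI r l * D i l) * ((1 / 2) * D p q) -
          ((1 / 2) * ∑ l, GI r l * D p l) * ((1 / 2) * D i q)))
        = GI p q * ∑ r, GG j r * RUS r p q
          + GI p q * ((1 / 4) * (D i j * D p q))
          - GI p q * ((1 / 4) * (D p j * D i q)) := by
      intro p q
      have hr : ∑ r, GG j r *
          (RUS r p q + (((1 / 2) * ∑ l, GI r l * D i l) * ((1 / 2) * D p q) -
            ((1 / 2) * ∑ l, GI r l * D p l) * ((1 / 2) * D i q)))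
          = ∑ r, (GG j r * RUS r p q
            + GG j r * (((1 / 2) * ∑ l, GI r l * D i l) * ((1 / 2) * D p q))
            - GG j r * (((1 / 2) * ∑ l, GI r l * D p l) * ((1 / 2) * D i q))) :=
        Finset.sum_congr rfl fun r _ => by ring
      rw [hr, Finset.sum_sub_distrib, Finset.sum_add_distrib, h4 p q, h5 p q]
      ring
    calc ∑ p, ∑ q, GI p q * ∑ r, GG j r *
        (RUS r p q + (((1 / 2) * ∑ l, GI r l * D i l) * ((1 / 2) * D p q) -
          ((1 / 2) * ∑ l, GI r l * D p l) * ((1 / 2) * D i q)))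
        = ∑ p, ∑ q, (GI p q * ∑ r, GG j r * RUS r p q
            + GI p q * ((1 / 4) * (D i j * D p q))
            - GI p q * ((1 / 4) * (D p j * D i q))) :=
          Finset.sum_congr rfl fun p _ => Finset.sum_congr rfl fun q _ => hsplit p q
      _ = ∑ p, (∑ q, GI p q * ∑ r, GG j r * RUS r p q
            + ∑ q, GI p q * ((1 / 4) * (D i j * D p q))
            - ∑ q, GI p q * ((1 / 4) * (D p j * D i q))) :=
          Finset.sum_congr rfl fun p _ => by
            rw [Finset.sum_sub_distrib, Finset.sum_add_distrib]
      _ = (∑ p, ∑ q, GI p q * ∑ r, GG j r * RUS r p q)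
            + (∑ p, ∑ q, GI p q * ((1 / 4) * (D i j * D p q)))
            - ∑ p, ∑ q, GI p q * ((1 / 4) * (D p j * D i q)) := by
          rw [Finset.sum_sub_distrib, Finset.sum_add_distrib]
      _ = (∑ p, ∑ q, GI p q * ∑ r, GG j r * RUS r p q)
            + (1 / 4) * (∑ p, ∑ q, GI p q * D i j * D p q)
            - (1 / 4) * S := by
          have e1 : ∑ p, ∑ q, GI p q * ((1 / 4) * (D i j * D p q))
              = (1 / 4) * (∑ p, ∑ q, GI p q * D i j * D p q) := by
            rw [Finset.mul_sum]
            refine Finset.sum_congr rfl fun p _ => ?_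
            rw [Finset.mul_sum]
            exact Finset.sum_congr rfl fun q _ => by ring
          have e2 : ∑ p, ∑ q, GI p q * ((1 / 4) * (D p j * D i q)) = (1 / 4) * S := by
            rw [hS, Finset.mul_sum]
            rw [show ∑ p, ∑ q, GI p q * ((1 / 4) * (D p j * D i q))
              = ∑ q, ∑ p, GI p q * ((1 / 4) * (D p j * D i q)) from Finset.sum_comm]
            refine Finset.sum_congr rfl fun q _ => ?_
            rw [Finset.mul_sum]
            refine Finset.sum_congr rfl fun p _ => ?_
            rw [hGIsymm p q, hDsymm p j]
            ring
          rw [e1, e2]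
  -- time chunk
  have hA : ∑ q, GG j q *
      (0 - ((1 / 2) * ∑ l, ((-∑ c, ∑ d, GI q c * D c d * GI d l) * D i l +
        GI q l * D2 i l)) +
        ∑ r, (0 - ((1 / 2) * ∑ l, GI q l * D r l) * ((1 / 2) * ∑ l, GI r l * D i l)))
      = (1 / 2) * S - (1 / 2) * D2 i j - (1 / 4) * S := by
    have hinner : ∀ q, GG j q *
        (0 - ((1 / 2) * ∑ l, ((-∑ c, ∑ d, GI q c * D c d * GI d l) * D i l +
          GI q l * D2 i l)) +
          ∑ r, (0 - ((1 / 2) * ∑ l, GI q l * D r l) * ((1 / 2) * ∑ l, GI r l * D i l)))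
        = (1 / 2) * (GG j q * ∑ l, (∑ c, ∑ d, GI q c * D c d * GI d l) * D i l)
          - (1 / 2) * (GG j q * ∑ l, GI q l * D2 i l)
          - GG j q * (∑ r, ((1 / 2) * ∑ l, GI q l * D r l) *
              ((1 / 2) * ∑ l, GI r l * D i l)) := by
      intro q
      have hsum : ∑ l, ((-∑ c, ∑ d, GI q c * D c d * GI d l) * D i l + GI q l * D2 i l)
          = -(∑ l, (∑ c, ∑ d, GI q c * D c d * GI d l) * D i l)
            + ∑ l, GI q l * D2 i l := by
        rw [Finset.sum_add_distrib, ← Finset.sum_neg_distrib]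
        congr 1
        exact Finset.sum_congr rfl fun l _ => by ring
      have hsum2 : ∑ r, (0 - ((1 / 2) * ∑ l, GI q l * D r l) *
          ((1 / 2) * ∑ l, GI r l * D i l))
          = -(∑ r, ((1 / 2) * ∑ l, GI q l * D r l) * ((1 / 2) * ∑ l, GI r l * D i l)) := by
        rw [← Finset.sum_neg_distrib]
        exact Finset.sum_congr rfl fun r _ => by ring
      rw [hsum, hsum2]
      ring
    calc ∑ q, GG j q *
        (0 - ((1 / 2) * ∑ l, ((-∑ c, ∑ d, GI q c * D c d * GI d l) * D i l +
          GI q l * D2 i l)) +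
          ∑ r, (0 - ((1 / 2) * ∑ l, GI q l * D r l) * ((1 / 2) * ∑ l, GI r l * D i l)))
        = ∑ q, ((1 / 2) * (GG j q * ∑ l, (∑ c, ∑ d, GI q c * D c d * GI d l) * D i l)
            - (1 / 2) * (GG j q * ∑ l, GI q l * D2 i l)
            - GG j q * (∑ r, ((1 / 2) * ∑ l, GI q l * D r l) *
                ((1 / 2) * ∑ l, GI r l * D i l))) :=
          Finset.sum_congr rfl fun q _ => hinner q
      _ = (1 / 2) * (∑ q, GG j q * ∑ l, (∑ c, ∑ d, GI q c * D c d * GI d l) * D i l)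
            - (1 / 2) * (∑ q, GG j q * ∑ l, GI q l * D2 i l)
            - ∑ q, GG j q * (∑ r, ((1 / 2) * ∑ l, GI q l * D r l) *
                ((1 / 2) * ∑ l, GI r l * D i l)) := by
          rw [Finset.sum_sub_distrib, Finset.sum_sub_distrib, Finset.mul_sum,
            Finset.mul_sum]
      _ = (1 / 2) * S - (1 / 2) * D2 i j - (1 / 4) * S := by rw [h1, h2, h3]
  rw [hA, hB]
  ring

end algebra
end HGF

namespace HGF
variable {n : ℕ}

section master
variable (g : ℝ → (Fin n → ℝ) → Matrix (Fin n) (Fin n) ℝ)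
variable (hsmooth : ∀ i j, ContDiff ℝ (⊤ : ℕ∞) (fun q : ℝ × (Fin n → ℝ) => g q.1 q.2 i j))
variable (U : Set (Fin n → ℝ)) (hU : IsOpen U)
variable (hmetric : ∀ t : ℝ, ∀ x ∈ U, (g t x).PosDef)
variable (z : Fin (n+1) → ℝ) (hz : (fun m => z m.succ) ∈ U) (i j : Fin n)

include hsmooth hU hmetric hz

omit hsmooth hU hmetric hz in
lemma Gif_pair (a b : Fin n) :
    Gif g a b (z 0, fun m => z m.succ) = (g (z 0) (fun m => z m.succ))⁻¹ a b := rfl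

omit hsmooth hU hmetric hz in
lemma Gif_Lz (a b : Fin n) :
    Gif g a b (L n z) = (g (z 0) (fun m => z m.succ))⁻¹ a b := rfl

omit hsmooth hU hmetric hz in
lemma Tf_pair (a b : Fin n) :
    Tf g a b (z 0, fun m => z m.succ) =
      deriv (fun t => g t (fun m => z m.succ) a b) (z 0) := rfl

omit hsmooth hU hmetric hz in
lemma Tf_Lz (a b : Fin n) :
    Tf g a b (L n z) = deriv (fun t => g t (fun m => z m.succ) a b) (z 0) := rfl

omit hsmooth hU hmetric hz in
lemma Cs_Lz (k a b : Fin n) :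
    Cs g k a b (L n z) = chris (g (z 0)) k a b (fun m => z m.succ) := rfl

omit hsmooth hU hmetric hz in
lemma D2_conv (a b : Fin n) :
    deriv (fun s => Tf g a b (s, fun m => z m.succ)) (z 0) =
      deriv (fun t => deriv (fun r => g r (fun m => z m.succ) a b) t) (z 0) := rfl

lemma riemUp_time (q' : Fin n) :
    riemUp (lorentz g) q'.succ i.succ 0 0 z
    = 0 - ((1 / 2) * ∑ l, ((-∑ c, ∑ d,
        (g (z 0) (fun m => z m.succ))⁻¹ q' c *
          deriv (fun t => g t (fun m => z m.succ) c d) (z 0) *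
          (g (z 0) (fun m => z m.succ))⁻¹ d l) *
        deriv (fun t => g t (fun m => z m.succ) i l) (z 0) +
        (g (z 0) (fun m => z m.succ))⁻¹ q' l *
          deriv (fun t => deriv (fun r => g r (fun m => z m.succ) i l) t) (z 0)))
      + ∑ r, (0 - ((1 / 2) * ∑ l, (g (z 0) (fun m => z m.succ))⁻¹ q' l *
          deriv (fun t => g t (fun m => z m.succ) r l) (z 0)) *
          ((1 / 2) * ∑ l, (g (z 0) (fun m => z m.succ))⁻¹ r l *
          deriv (fun t => g t (fun m => z m.succ) i l) (z 0))) := by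
  have hd : IsUnit (g (z 0) (fun m => z m.succ)).det :=
    isUnit_det_of_mem g U hmetric z hz
  have hpd : ∀ s : ℝ, (g s (fun m => z m.succ)).PosDef := fun s => hmetric s _ hz
  unfold riemUp
  rw [pd_chrisL_s_00 g hsmooth U hU hmetric z hz i.succ q']
  rw [pd0_chrisL_s_s0 g hsmooth U hU hmetric z hz q' i]
  rw [deriv_Gkf_slice g hsmooth hpd q' i]
  rw [Fin.sum_univ_succ]
  simp only [chrisL_0_00 g z hd, chrisL_s_00 g z hd, chrisL_0_s0 g z hd,
    chrisL_s_s0 g hsmooth z hd, chrisL_s_0s g hsmooth z hd, chrisL_s_ss g hsmooth z hd]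
  simp only [deriv_Gif_slice g hsmooth hpd]
  simp only [Gif_pair g z, Gif_Lz g z, Tf_pair g z, Tf_Lz g z, Cs_Lz g z, D2_conv g z]
  have hsum : ∑ r : Fin n, (chris (g (z 0)) q' i r (fun m => z m.succ) * 0 -
      (1 / 2 * ∑ l, (g (z 0) (fun m => z m.succ))⁻¹ q' l *
        deriv (fun t => g t (fun m => z m.succ) r l) (z 0)) *
      (1 / 2 * ∑ l, (g (z 0) (fun m => z m.succ))⁻¹ r l *
        deriv (fun t => g t (fun m => z m.succ) i l) (z 0)))
      = ∑ r : Fin n, (0 -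
      (1 / 2 * ∑ l, (g (z 0) (fun m => z m.succ))⁻¹ q' l *
        deriv (fun t => g t (fun m => z m.succ) r l) (z 0)) *
      (1 / 2 * ∑ l, (g (z 0) (fun m => z m.succ))⁻¹ r l *
        deriv (fun t => g t (fun m => z m.succ) i l) (z 0))) :=
    Finset.sum_congr rfl fun r _ => by ring
  rw [hsum]
  ring

lemma riemUp_space (r p q' : Fin n) :
    riemUp (lorentz g) r.succ i.succ p.succ q'.succ z
    = riemUp (g (z 0)) r i p q' (fun m => z m.succ)
      + (((1 / 2) * ∑ l, (g (z 0) (fun m => z m.succ))⁻¹ r l *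
          deriv (fun t => g t (fun m => z m.succ) i l) (z 0)) *
        ((1 / 2) * deriv (fun t => g t (fun m => z m.succ) p q') (z 0)) -
        ((1 / 2) * ∑ l, (g (z 0) (fun m => z m.succ))⁻¹ r l *
          deriv (fun t => g t (fun m => z m.succ) p l) (z 0)) *
        ((1 / 2) * deriv (fun t => g t (fun m => z m.succ) i q') (z 0))) := by
  have hd : IsUnit (g (z 0) (fun m => z m.succ)).det :=
    isUnit_det_of_mem g U hmetric z hz
  unfold riemUp
  rw [pds_chrisL_s_ss g hsmooth U hU hmetric z hz i r p q']
  rw [pds_chrisL_s_ss g hsmooth U hU hmetric z hz p r i q']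
  rw [Fin.sum_univ_succ]
  simp only [chrisL_0_00 g z hd, chrisL_s_00 g z hd, chrisL_0_s0 g z hd,
    chrisL_0_0s g z hd, chrisL_0_ss g hsmooth z hd,
    chrisL_s_s0 g hsmooth z hd, chrisL_s_0s g hsmooth z hd, chrisL_s_ss g hsmooth z hd]
  simp only [Gif_pair g z, Gif_Lz g z, Tf_pair g z, Tf_Lz g z, Cs_Lz g z, D2_conv g z]
  ring

lemma master :
    ricci (lorentz g) i.succ j.succ z
    = ricci (g (z 0)) i j (fun m => z m.succ)
      + (1 / 2) * deriv (fun t => deriv (fun r => g r (fun m => z m.succ) i j) t) (z 0)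
      + (1 / 4) * ∑ p, ∑ q, (g (z 0) (fun m => z m.succ))⁻¹ p q *
          deriv (fun t => g t (fun m => z m.succ) i j) (z 0) *
          deriv (fun t => g t (fun m => z m.succ) p q) (z 0)
      - (1 / 2) * ∑ p, ∑ q, (g (z 0) (fun m => z m.succ))⁻¹ p q *
          deriv (fun t => g t (fun m => z m.succ) i p) (z 0) *
          deriv (fun t => g t (fun m => z m.succ) j q) (z 0) := by
  have hd : IsUnit (g (z 0) (fun m => z m.succ)).det :=
    isUnit_det_of_mem g U hmetric z hz
  unfold ricci riem
  rw [lorentz_inv_eq g z hd]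
  simp only [Fin.sum_univ_succ]
  simp only [lorentzInv_00, lorentzInv_0s, lorentzInv_s0, lorentzInv_ss,
    lorentz_00, lorentz_0s, lorentz_s0, lorentz_ss]
  simp only [zero_mul, mul_zero, zero_add, add_zero, Finset.sum_const_zero]
  simp only [riemUp_time g hsmooth U hU hmetric z hz i,
    riemUp_space g hsmooth U hU hmetric z hz i]
  simp only [Gif_Lz g z, Tf_Lz g z]
  simp only [show ∀ a b : Fin n, F g a b (L n z) = g (z 0) (fun m => z m.succ) a b
    from fun a b => rfl]
  have hherm : ∀ s : ℝ, ∀ a b : Fin n,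
      g s (fun m => z m.succ) a b = g s (fun m => z m.succ) b a := by
    intro s a b
    have h := ((hmetric s _ hz).1).apply b a
    rw [star_trivial] at h
    exact h
  have hDsym : ∀ a b : Fin n, deriv (fun t => g t (fun m => z m.succ) a b) (z 0) =
      deriv (fun t => g t (fun m => z m.succ) b a) (z 0) := by
    intro a b
    have : (fun t => g t (fun m => z m.succ) a b) =
        (fun t => g t (fun m => z m.succ) b a) := funext fun s => hherm s a b
    rw [this]
  have hGIsym : ∀ a b : Fin n, (g (z 0) (fun m => z m.succ))⁻¹ a b =
      (g (z 0) (fun m => z m.succ))⁻¹ b a := by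
    intro a b
    have hsym : Matrix.transpose (g (z 0) (fun m => z m.succ)) =
        g (z 0) (fun m => z m.succ) := by
      ext a' b'
      rw [Matrix.transpose_apply]
      exact hherm _ _ _
    calc (g (z 0) (fun m => z m.succ))⁻¹ a b
        = Matrix.transpose ((g (z 0) (fun m => z m.succ))⁻¹) b a :=
          (Matrix.transpose_apply _ b a).symm
      _ = (Matrix.transpose (g (z 0) (fun m => z m.succ)))⁻¹ b a := by
          rw [Matrix.transpose_nonsing_inv]
      _ = (g (z 0) (fun m => z m.succ))⁻¹ b a := by rw [hsym]
  have hGGi : ∀ a b : Fin n, ∑ c, g (z 0) (fun m => z m.succ) a c *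
      (g (z 0) (fun m => z m.succ))⁻¹ c b = if a = b then 1 else 0 := by
    intro a b
    rw [← Matrix.mul_apply, Matrix.mul_nonsing_inv _ hd, Matrix.one_apply]
  exact algebra_main (fun a b => g (z 0) (fun m => z m.succ) a b)
    (fun a b => (g (z 0) (fun m => z m.succ))⁻¹ a b)
    (fun a b => deriv (fun t => g t (fun m => z m.succ) a b) (z 0))
    (fun a b => deriv (fun t => deriv (fun r => g r (fun m => z m.succ) a b) t) (z 0))
    j i hGGi hDsym hGIsym
    (fun r p q => riemUp (g (z 0)) r i p q (fun m => z m.succ))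

end master
end HGF

/-- **Spatial vacuum Einstein equations for a metric with orthogonal time-axis**
(equation (6.4)): `R̂_{ij} = 0` iff
`∂²g_{ij}/∂t² = -2 R_{ij} - (1/2) g^{pq} (∂g_{ij}/∂t)(∂g_{pq}/∂t)
  + g^{pq} (∂g_{ip}/∂t)(∂g_{jq}/∂t)`; the hyperbolic geometric flow consists of the
leading (second-order) terms of these equations. -/
theorem lorentz_vacuum_einstein_spatial (n : ℕ) (hn : 2 ≤ n)
    (U : Set (Fin n → ℝ)) (hU : IsOpen U)
    (g : ℝ → (Fin n → ℝ) → Matrix (Fin n) (Fin n) ℝ)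
    (hsmooth : ∀ i j, ContDiff ℝ (⊤ : ℕ∞) (fun q : ℝ × (Fin n → ℝ) => g q.1 q.2 i j))
    (hmetric : ∀ t : ℝ, ∀ x ∈ U, (g t x).PosDef) :
    ∀ z : Fin (n + 1) → ℝ, (fun m => z m.succ) ∈ U →
      ∀ i j : Fin n,
        ricci (lorentz g) i.succ j.succ z = 0 ↔
          deriv (fun t => deriv (fun r => g r (fun m => z m.succ) i j) t) (z 0) =
            -2 * ricci (g (z 0)) i j (fun m => z m.succ)
            - (1 / 2) * ∑ p, ∑ q, (g (z 0) (fun m => z m.succ))⁻¹ p q *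
                deriv (fun t => g t (fun m => z m.succ) i j) (z 0) *
                deriv (fun t => g t (fun m => z m.succ) p q) (z 0)
            + ∑ p, ∑ q, (g (z 0) (fun m => z m.succ))⁻¹ p q *
                deriv (fun t => g t (fun m => z m.succ) i p) (z 0) *
                deriv (fun t => g t (fun m => z m.succ) j q) (z 0) := by
  intro z hz i j
  have master := HGF.master g hsmooth U hU hmetric z hz i j
  constructor
  · intro h
    rw [h] at master
    linarith [master]
  · intro h
    rw [master, h]
    ring
end
end

section
/- Hyperbolic geometric flow in elliptic coordinates (equations (3.6)–(3.7)): let g be a Riemannian metric in local coordinates on an open set U ⊆ ℝⁿ whose contracted Christoffel symbols vanish identically on U, i.e. Γ^k = Σ_{p,q} g^{pq} Γ^k_{pq} = 0 on U for every k. Then on U, for all indices i, j: −2R_{ij} = Σ_{k,l} g^{kl} ∂²g_{ij}/∂x^k∂x^l + H̃_{ij}, where H̃_{ij} = −2 Σ_{k,l,p,q} g^{kl} g_{pq} Γ^p_{ik} Γ^q_{jl} − Σ_{k,p,q,r,s} g_{ik} Γ^k_{rs} g^{pr} g^{qs} ∂g_{pq}/∂x^j − Σ_{k,p,q,r,s}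 g_{jk} Γ^k_{rs} g^{pr} g^{qs} ∂g_{pq}/∂x^i. Consequently, a smooth family g(x,t) of such metrics satisfies the hyperbolic geometric flow ∂²g_{ij}/∂t² = −2R_{ij} on U if and only if it satisfies the strictly hyperbolic system ∂²g_{ij}/∂t² = Σ_{k,l} g^{kl} ∂²g_{ij}/∂x^k∂x^l + H̃_{ij}. -/
noncomputable section

open scoped BigOperators

/-- The contracted Christoffel symbols `Γ^k = Σ g^{pq} Γ^k_{pq}`. -/
def contractedChris {n : ℕ} (g : (Fin n → ℝ) → Matrix (Fin n) (Fin n) ℝ) (k : Fin n)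
    (x : Fin n → ℝ) : ℝ :=
  ∑ p, ∑ q, (g x)⁻¹ p q * chris g k p q x

/-- The quadratic nonlinearity `H̃_{ij}` of (3.7). -/
def Htilde {n : ℕ} (g : (Fin n → ℝ) → Matrix (Fin n) (Fin n) ℝ) (i j : Fin n)
    (x : Fin n → ℝ) : ℝ :=
  -2 * ∑ k, ∑ l, ∑ p, ∑ q, (g x)⁻¹ k l * g x p q * chris g p i k x * chris g q j l x
  - ∑ k, ∑ p, ∑ q, ∑ r, ∑ s,
      g x i k * chris g k r s x * (g x)⁻¹ p r * (g x)⁻¹ q s * pd j (fun w => g w p q) x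
  - ∑ k, ∑ p, ∑ q, ∑ r, ∑ s,
      g x j k * chris g k r s x * (g x)⁻¹ p r * (g x)⁻¹ q s * pd i (fun w => g w p q) x

namespace HGFaux
variable {n : ℕ}

lemma pd_congr {f h : (Fin n → ℝ) → ℝ} {x : Fin n → ℝ} (i : Fin n)
    (hfh : f =ᶠ[nhds x] h) : pd i f x = pd i h x := by
  unfold pd; rw [hfh.fderiv_eq]

lemma pd_const (i : Fin n) (x : Fin n → ℝ) (c : ℝ) : pd i (fun _ => c) x = 0 := by
  simp [pd]

lemma pd_add (i : Fin n) {f h : (Fin n → ℝ) → ℝ} {x : Fin n → ℝ}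
    (hf : DifferentiableAt ℝ f x) (hh : DifferentiableAt ℝ h x) :
    pd i (fun y => f y + h y) x = pd i f x + pd i h x := by
  simp [pd, fderiv_fun_add hf hh]

lemma pd_sub (i : Fin n) {f h : (Fin n → ℝ) → ℝ} {x : Fin n → ℝ}
    (hf : DifferentiableAt ℝ f x) (hh : DifferentiableAt ℝ h x) :
    pd i (fun y => f y - h y) x = pd i f x - pd i h x := by
  simp [pd, fderiv_fun_sub hf hh]

lemma pd_mul (i : Fin n) {f h : (Fin n → ℝ) → ℝ} {x : Fin n → ℝ}
    (hf : DifferentiableAt ℝ f x) (hh : DifferentiableAt ℝ h x) :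
    pd i (fun y => f y * h y) x = f x * pd i h x + h x * pd i f x := by
  simp [pd, fderiv_fun_mul hf hh]

lemma pd_const_mul (i : Fin n) {f : (Fin n → ℝ) → ℝ} {x : Fin n → ℝ} (c : ℝ)
    (hf : DifferentiableAt ℝ f x) :
    pd i (fun y => c * f y) x = c * pd i f x := by
  simp [pd, fderiv_const_mul hf c]

lemma pd_sum (i : Fin n) {ι : Type*} (s : Finset ι) {F : ι → (Fin n → ℝ) → ℝ}
    {x : Fin n → ℝ} (hF : ∀ a ∈ s, DifferentiableAt ℝ (F a) x) :
    pd i (fun y => ∑ a ∈ s, F a y) x = ∑ a ∈ s, pd i (F a) x := by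
  simp [pd, fderiv_fun_sum hF]

lemma contDiff_pd (i : Fin n) {f : (Fin n → ℝ) → ℝ} (hf : ContDiff ℝ (⊤ : ℕ∞) f) :
    ContDiff ℝ (⊤ : ℕ∞) (fun y => pd i f y) := by
  show ContDiff ℝ (⊤ : ℕ∞) (fun y => fderiv ℝ f y (Pi.single i 1))
  exact (hf.fderiv_right (m := (⊤ : ℕ∞)) (by norm_cast)).clm_apply
    contDiff_const

lemma pd_swap (i j : Fin n) {f : (Fin n → ℝ) → ℝ} (hf : ContDiff ℝ (⊤ : ℕ∞) f)
    (x : Fin n → ℝ) :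
    pd i (fun y => pd j f y) x = pd j (fun y => pd i f y) x := by
  have hsym : IsSymmSndFDerivAt ℝ f x := by
    apply hf.contDiffAt.isSymmSndFDerivAt
    rw [minSmoothness_of_isRCLikeNormedField]
    norm_cast
  have hd : DifferentiableAt ℝ (fderiv ℝ f) x :=
    ((hf.fderiv_right (m := (⊤ : ℕ∞)) (by norm_cast)).differentiable (by norm_cast)) x
  have key : ∀ u v : Fin n → ℝ,
      pd i (fun y => fderiv ℝ f y u) x = fderiv ℝ (fderiv ℝ f) x (Pi.single i 1) u := by
    intro u v
    unfold pd
    rw [fderiv_clm_apply hd (differentiableAt_const u)]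
    simp
  unfold pd
  rw [show (fun y => fderiv ℝ f y (Pi.single j 1)) = (fun y => fderiv ℝ f y (Pi.single j 1)) from rfl]
  have h1 : fderiv ℝ (fun y => fderiv ℝ f y (Pi.single j 1)) x (Pi.single i 1)
      = fderiv ℝ (fderiv ℝ f) x (Pi.single i 1) (Pi.single j 1) := by
    rw [fderiv_clm_apply hd (differentiableAt_const _)]; simp
  have h2 : fderiv ℝ (fun y => fderiv ℝ f y (Pi.single i 1)) x (Pi.single j 1)
      = fderiv ℝ (fderiv ℝ f) x (Pi.single j 1) (Pi.single i 1) := by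
    rw [fderiv_clm_apply hd (differentiableAt_const _)]; simp
  rw [h1, h2, hsym.eq]

end HGFaux

namespace HGFaux2
open HGFaux
variable {n : ℕ}

lemma contDiff_finset_prod {ι : Type*} (s : Finset ι) (F : ι → (Fin n → ℝ) → ℝ) :
    (∀ a ∈ s, ContDiff ℝ (⊤ : ℕ∞) (F a)) →
      ContDiff ℝ (⊤ : ℕ∞) (fun y => ∏ a ∈ s, F a y) := by
  classical
  induction s using Finset.cons_induction with
  | empty => intro _; simpa using contDiff_const
  | cons a t ha ih =>
      intro h
      simp only [Finset.prod_cons]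
      exact (h a (Finset.mem_cons_self a t)).mul
        (ih fun b hb => h b (Finset.mem_cons_of_mem hb))

lemma contDiff_det {M : (Fin n → ℝ) → Matrix (Fin n) (Fin n) ℝ}
    (h : ∀ a b, ContDiff ℝ (⊤ : ℕ∞) (fun y => M y a b)) :
    ContDiff ℝ (⊤ : ℕ∞) (fun y => (M y).det) := by
  simp only [Matrix.det_apply']
  apply ContDiff.sum
  intro σ _
  exact contDiff_const.mul (contDiff_finset_prod _ _ fun c _ => h (σ c) c)

lemma contDiff_adjugate {M : (Fin n → ℝ) → Matrix (Fin n) (Fin n) ℝ}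
    (h : ∀ a b, ContDiff ℝ (⊤ : ℕ∞) (fun y => M y a b)) (a b : Fin n) :
    ContDiff ℝ (⊤ : ℕ∞) (fun y => (M y).adjugate a b) := by
  simp only [Matrix.adjugate_apply]
  apply contDiff_det
  intro c d
  by_cases hc : c = b
  · simp only [Matrix.updateRow_apply, hc, if_pos rfl]
    exact contDiff_const
  · simp only [Matrix.updateRow_apply, if_neg hc]
    exact h c d

lemma differentiableAt_inv_entry {M : (Fin n → ℝ) → Matrix (Fin n) (Fin n) ℝ}
    (h : ∀ a b, ContDiff ℝ (⊤ : ℕ∞) (fun y => M y a b)) {x : Fin n → ℝ}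
    (hdet : (M x).det ≠ 0) (a b : Fin n) :
    DifferentiableAt ℝ (fun y => (M y)⁻¹ a b) x := by
  have hfun : (fun y => (M y)⁻¹ a b) = fun y => ((M y).det)⁻¹ * (M y).adjugate a b := by
    funext y
    rw [Matrix.inv_def, Matrix.smul_apply, Ring.inverse_eq_inv, smul_eq_mul]
  rw [hfun]
  have h1 : DifferentiableAt ℝ (fun y => (M y).det) x :=
    ((contDiff_det h).differentiable (by norm_cast)) x
  exact (h1.inv hdet).mul (((contDiff_adjugate h a b).differentiable (by norm_cast)) x)

end HGFaux2

theorem key_algebra {n : ℕ} (A B : Fin n → Fin n → ℝ)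
    (C : Fin n → Fin n → Fin n → ℝ) (D : Fin n → Fin n → Fin n → ℝ)
    (E : Fin n → Fin n → Fin n → Fin n → ℝ)
    (DB : Fin n → Fin n → Fin n → ℝ) (DC : Fin n → Fin n → Fin n → Fin n → ℝ)
    (hB : ∀ a b, B a b = B b a)
    (hAB : ∀ a b, (∑ m, A a m * B m b) = if a = b then (1:ℝ) else 0)
    (hC : ∀ c a b, C c a b = (1/2) * ∑ l, B c l * (D a b l + D b a l - D l a b))
    (hD : ∀ m a b, D m a b = D m b a)
    (hE1 : ∀ m l a b, E m l a b = E l m a b)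
    (hE2 : ∀ m l a b, E m l a b = E m l b a)
    (hDB : ∀ m a b, DB m a b = -∑ p, ∑ q, B a p * D m p q * B q b)
    (hDC : ∀ m c a b, DC m c a b = (1/2) * ∑ l, (DB m c l * (D a b l + D b a l - D l a b)
        + B c l * (E m a b l + E m b a l - E m l a b)))
    (hGa : ∀ c, (∑ p, ∑ q, B p q * C c p q) = 0)
    (hdG : ∀ m c, (∑ p, ∑ q, (DB m p q * C c p q + B p q * DC m c p q)) = 0)
    (i k : Fin n) :
    -2 * (∑ a, ∑ b, B a b * (∑ p, A k p *
        (DC i p a b - DC a p i b + ∑ q, (C p i q * C q a b - C p a q * C q i b))))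
      = (∑ a, ∑ b, B a b * E a b i k)
        + (-2 * ∑ a, ∑ b, ∑ p, ∑ q, B a b * A p q * C p i a * C q k b
           - ∑ a, ∑ p, ∑ q, ∑ r, ∑ s, A i a * C a r s * B p r * B q s * D k p q
           - ∑ a, ∑ p, ∑ q, ∑ r, ∑ s, A k a * C a r s * B p r * B q s * D i p q) := by
  classical
  -- basic contraction helpers
  have collapse : ∀ (f : Fin n → ℝ) (a : Fin n),
      (∑ b, (if a = b then (1:ℝ) else 0) * f b) = f a := by
    intro f a; simp [ite_mul]
  have contrAB : ∀ (f : Fin n → ℝ) (a : Fin n),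
      (∑ c, (∑ p, A a p * B p c) * f c) = f a := by
    intro f a
    calc (∑ c, (∑ p, A a p * B p c) * f c)
        = ∑ c, (if a = c then (1:ℝ) else 0) * f c :=
          Finset.sum_congr rfl fun c _ => by rw [hAB]
      _ = f a := collapse f a
  have swap4 : ∀ (F : Fin n → Fin n → Fin n → Fin n → ℝ),
      (∑ a, ∑ b, ∑ p, ∑ q, F a b p q) = ∑ p, ∑ q, ∑ a, ∑ b, F a b p q := by
    intro F
    calc (∑ a, ∑ b, ∑ p, ∑ q, F a b p q)
        = ∑ a, ∑ p, ∑ b, ∑ q, F a b p q :=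
          Finset.sum_congr rfl fun a _ => Finset.sum_comm
      _ = ∑ p, ∑ a, ∑ b, ∑ q, F a b p q := Finset.sum_comm
      _ = ∑ p, ∑ a, ∑ q, ∑ b, F a b p q := Finset.sum_congr rfl fun p _ =>
          Finset.sum_congr rfl fun a _ => Finset.sum_comm
      _ = ∑ p, ∑ q, ∑ a, ∑ b, F a b p q := Finset.sum_congr rfl fun p _ => Finset.sum_comm
  have swap3 : ∀ (F : Fin n → Fin n → Fin n → ℝ),
      (∑ a, ∑ b, ∑ p, F a b p) = ∑ p, ∑ a, ∑ b, F a b p := by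
    intro F
    calc (∑ a, ∑ b, ∑ p, F a b p)
        = ∑ a, ∑ p, ∑ b, F a b p := Finset.sum_congr rfl fun a _ => Finset.sum_comm
      _ = ∑ p, ∑ a, ∑ b, F a b p := Finset.sum_comm
  have mulsum2 : ∀ (c : ℝ) (F : Fin n → Fin n → ℝ),
      c * (∑ a, ∑ b, F a b) = ∑ a, ∑ b, c * F a b := by
    intro c F
    rw [Finset.mul_sum]
    exact Finset.sum_congr rfl fun a _ => by rw [Finset.mul_sum]
  have sumul2 : ∀ (c : ℝ) (F : Fin n → Fin n → ℝ),
      (∑ a, ∑ b, F a b) * c = ∑ a, ∑ b, F a b * c := by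
    intro c F
    rw [Finset.sum_mul]
    exact Finset.sum_congr rfl fun a _ => by rw [Finset.sum_mul]
  have negsum2 : ∀ (F : Fin n → Fin n → ℝ),
      (∑ a, ∑ b, -F a b) = -∑ a, ∑ b, F a b := by
    intro F
    rw [← Finset.sum_neg_distrib]
    exact Finset.sum_congr rfl fun a _ => by rw [← Finset.sum_neg_distrib]
  -- symmetry of C in its last two arguments
  have hCs : ∀ c a b, C c a b = C c b a := by
    intro c a b
    rw [hC, hC]
    congr 1
    exact Finset.sum_congr rfl fun l _ => by rw [hD l a b]; ring
  -- lowering the index of C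
  have lower : ∀ a m b, (∑ c, A a c * C c m b)
      = (1/2) * (D m b a + D b m a - D a m b) := by
    intro a m b
    calc (∑ c, A a c * C c m b)
        = ∑ c, ∑ l, (A a c * B c l) * ((1/2) * (D m b l + D b m l - D l m b)) := by
          refine Finset.sum_congr rfl fun c _ => ?_
          rw [hC, Finset.mul_sum, Finset.mul_sum]
          exact Finset.sum_congr rfl fun l _ => by ring
      _ = ∑ l, ∑ c, (A a c * B c l) * ((1/2) * (D m b l + D b m l - D l m b)) :=
          Finset.sum_comm
      _ = ∑ l, (∑ c, A a c * B c l) * ((1/2) * (D m b l + D b m l - D l m b)) := by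
          refine Finset.sum_congr rfl fun l _ => ?_
          rw [Finset.sum_mul]
      _ = (1/2) * (D m b a + D b m a - D a m b) := contrAB _ a
  -- metric compatibility
  have nabla : ∀ m a b, D m a b = ∑ c, (A a c * C c m b + A b c * C c m a) := by
    intro m a b
    rw [Finset.sum_add_distrib, lower a m b, lower b m a, hD m b a]
    ring
  -- contraction of A with DB
  have contrADB : ∀ m a b, (∑ p, A a p * DB m p b) = -∑ q, D m a q * B q b := by
    intro m a b
    calc (∑ p, A a p * DB m p b)
        = ∑ p, -(∑ c, ∑ q, A a p * (B p c * D m c q * B q b)) := by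
          refine Finset.sum_congr rfl fun p _ => ?_
          rw [hDB, mul_neg, mulsum2]
      _ = -(∑ p, ∑ c, ∑ q, A a p * (B p c * D m c q * B q b)) := Finset.sum_neg_distrib _
      _ = -(∑ c, ∑ q, ∑ p, A a p * (B p c * D m c q * B q b)) := by
          rw [(swap3 (fun c q p => A a p * (B p c * D m c q * B q b))).symm]
      _ = -(∑ c, ∑ q, (∑ p, A a p * B p c) * (D m c q * B q b)) := by
          congr 1
          refine Finset.sum_congr rfl fun c _ => Finset.sum_congr rfl fun q _ => ?_
          rw [Finset.sum_mul]
          exact Finset.sum_congr rfl fun p _ => by ring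
      _ = -(∑ c, ∑ q, (if a = c then (1:ℝ) else 0) * (D m c q * B q b)) := by
          congr 1
          exact Finset.sum_congr rfl fun c _ => Finset.sum_congr rfl fun q _ => by rw [hAB]
      _ = -(∑ c, (if a = c then (1:ℝ) else 0) * (∑ q, D m c q * B q b)) := by
          congr 1
          refine Finset.sum_congr rfl fun c _ => ?_
          rw [← Finset.mul_sum]
      _ = -∑ q, D m a q * B q b := by
          rw [collapse (fun c => ∑ q, D m c q * B q b) a]
  -- C as a half-contraction of B with S
  have Cform : ∀ c a b, C c a b = ∑ m, B c m * ((1/2) * (D a b m + D b a m - D m a b)) := by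
    intro c a b
    rw [hC, Finset.mul_sum]
    exact Finset.sum_congr rfl fun m _ => by ring
  -- the fundamental contraction-expansion of A · DC
  have expand_contract : ∀ i' k' a b, (∑ p, A k' p * DC i' p a b)
      = -(∑ q, D i' k' q * C q a b)
        + (1/2) * (E i' a b k' + E i' b a k' - E i' k' a b) := by
    intro i' k' a b
    calc (∑ p, A k' p * DC i' p a b)
        = ∑ p, ∑ m, A k' p * ((1/2) * (DB i' p m * (D a b m + D b a m - D m a b)
            + B p m * (E i' a b m + E i' b a m - E i' m a b))) := by
          refine Finset.sum_congr rfl fun p _ => ?_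
          rw [hDC, Finset.mul_sum, Finset.mul_sum]
      _ = ∑ m, ∑ p, A k' p * ((1/2) * (DB i' p m * (D a b m + D b a m - D m a b)
            + B p m * (E i' a b m + E i' b a m - E i' m a b))) := Finset.sum_comm
      _ = ∑ m, ((∑ p, A k' p * DB i' p m) * ((1/2) * (D a b m + D b a m - D m a b))
            + (∑ p, A k' p * B p m) * ((1/2) * (E i' a b m + E i' b a m - E i' m a b))) := by
          refine Finset.sum_congr rfl fun m _ => ?_
          rw [Finset.sum_mul, Finset.sum_mul, ← Finset.sum_add_distrib]
          exact Finset.sum_congr rfl fun p _ => by ring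
      _ = ∑ m, ((-∑ q, D i' k' q * B q m) * ((1/2) * (D a b m + D b a m - D m a b))
            + (if k' = m then (1:ℝ) else 0)
              * ((1/2) * (E i' a b m + E i' b a m - E i' m a b))) := by
          refine Finset.sum_congr rfl fun m _ => ?_
          rw [contrADB i' k' m, hAB]
      _ = (∑ m, (-∑ q, D i' k' q * B q m) * ((1/2) * (D a b m + D b a m - D m a b)))
            + ∑ m, (if k' = m then (1:ℝ) else 0)
              * ((1/2) * (E i' a b m + E i' b a m - E i' m a b)) :=
          Finset.sum_add_distrib
      _ = -(∑ q, D i' k' q * C q a b)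
            + (1/2) * (E i' a b k' + E i' b a k' - E i' k' a b) := by
          rw [collapse (fun m => (1/2) * (E i' a b m + E i' b a m - E i' m a b)) k']
          congr 1
          calc (∑ m, (-∑ q, D i' k' q * B q m) * ((1/2) * (D a b m + D b a m - D m a b)))
              = ∑ m, ∑ q, -(D i' k' q * (B q m * ((1/2) * (D a b m + D b a m - D m a b)))) := by
                refine Finset.sum_congr rfl fun m _ => ?_
                rw [neg_mul, Finset.sum_mul, ← Finset.sum_neg_distrib]
                exact Finset.sum_congr rfl fun q _ => by ring
            _ = ∑ q, ∑ m, -(D i' k' q * (B q m * ((1/2) * (D a b m + D b a m - D m a b)))) :=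
                Finset.sum_comm
            _ = ∑ q, -(D i' k' q * C q a b) := by
                refine Finset.sum_congr rfl fun q _ => ?_
                rw [Finset.sum_neg_distrib, ← Finset.mul_sum, ← Cform]
            _ = -(∑ q, D i' k' q * C q a b) := by
                rw [Finset.sum_neg_distrib]
  -- sum of B against DC, via the differentiated harmonicity condition
  have sumBDC : ∀ i' p, (∑ a, ∑ b, B a b * DC i' p a b)
      = -∑ a, ∑ b, DB i' a b * C p a b := by
    intro i' p
    have h := hdG i' p
    simp only [Finset.sum_add_distrib] at h
    linarith
  -- first-order form of the T1-type sums
  have genT1fo : ∀ i' k', (∑ a, ∑ b, ∑ p, B a b * (A k' p * DC i' p a b))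
      = ∑ a, ∑ p, ∑ q, ∑ r, ∑ s, A k' a * C a r s * B p r * B q s * D i' p q := by
    intro i' k'
    calc (∑ a, ∑ b, ∑ p, B a b * (A k' p * DC i' p a b))
        = ∑ p, ∑ a, ∑ b, B a b * (A k' p * DC i' p a b) := swap3 _
      _ = ∑ p, A k' p * (∑ a, ∑ b, B a b * DC i' p a b) := by
          refine Finset.sum_congr rfl fun p _ => ?_
          rw [Finset.mul_sum]
          refine Finset.sum_congr rfl fun a _ => ?_
          rw [Finset.mul_sum]
          exact Finset.sum_congr rfl fun b _ => by ring
      _ = ∑ p, A k' p * (-∑ a, ∑ b, DB i' a b * C p a b) := by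
          refine Finset.sum_congr rfl fun p _ => ?_
          rw [sumBDC]
      _ = ∑ p, ∑ a, ∑ b, ∑ r, ∑ s, A k' p * (B r a * D i' r s * B s b * C p a b) := by
          refine Finset.sum_congr rfl fun p _ => ?_
          rw [mul_neg, mulsum2]
          rw [show (∑ a, ∑ b, A k' p * (DB i' a b * C p a b))
              = ∑ a, ∑ b, -(∑ r, ∑ s, A k' p * (B r a * D i' r s * B s b * C p a b)) from
            Finset.sum_congr rfl fun a _ => Finset.sum_congr rfl fun b _ => by
              rw [hDB, neg_mul, mul_neg]
              congr 1
              rw [sumul2, mulsum2]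
              refine Finset.sum_congr rfl fun r _ => Finset.sum_congr rfl fun s _ => ?_
              rw [hB a r]]
          rw [negsum2, neg_neg]
      _ = ∑ p, ∑ r, ∑ s, ∑ a, ∑ b, A k' p * (B r a * D i' r s * B s b * C p a b) :=
          Finset.sum_congr rfl fun p _ => swap4 _
      _ = ∑ a, ∑ p, ∑ q, ∑ r, ∑ s, A k' a * C a r s * B p r * B q s * D i' p q := by
          refine Finset.sum_congr rfl fun p _ => Finset.sum_congr rfl fun r _ =>
            Finset.sum_congr rfl fun s _ => Finset.sum_congr rfl fun a _ =>
            Finset.sum_congr rfl fun b _ => by ring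
  -- second-order form of the T1-type sums
  have genT1so : ∀ i' k', (∑ a, ∑ b, ∑ p, B a b * (A k' p * DC i' p a b))
      = (∑ a, ∑ b, B a b * E i' a b k') - (1/2) * ∑ a, ∑ b, B a b * E i' k' a b := by
    intro i' k'
    calc (∑ a, ∑ b, ∑ p, B a b * (A k' p * DC i' p a b))
        = ∑ a, ∑ b, B a b * (∑ p, A k' p * DC i' p a b) := by
          refine Finset.sum_congr rfl fun a _ => Finset.sum_congr rfl fun b _ => ?_
          rw [Finset.mul_sum]
      _ = ∑ a, ∑ b, (-(B a b * ∑ q, D i' k' q * C q a b)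
            + B a b * ((1/2) * (E i' a b k' + E i' b a k' - E i' k' a b))) := by
          refine Finset.sum_congr rfl fun a _ => Finset.sum_congr rfl fun b _ => ?_
          rw [expand_contract i' k' a b]
          ring
      _ = (∑ a, ∑ b, -(B a b * ∑ q, D i' k' q * C q a b))
            + ∑ a, ∑ b, B a b * ((1/2) * (E i' a b k' + E i' b a k' - E i' k' a b)) := by
          simp only [Finset.sum_add_distrib]
      _ = (∑ a, ∑ b, B a b * E i' a b k') - (1/2) * ∑ a, ∑ b, B a b * E i' k' a b := by
          have hzero : (∑ a, ∑ b, -(B a b * ∑ q, D i' k' q * C q a b)) = 0 := by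
            have : (∑ a, ∑ b, -(B a b * ∑ q, D i' k' q * C q a b))
                = ∑ a, ∑ b, ∑ q, -(D i' k' q * (B a b * C q a b)) := by
              refine Finset.sum_congr rfl fun a _ => Finset.sum_congr rfl fun b _ => ?_
              rw [Finset.mul_sum, ← Finset.sum_neg_distrib]
              exact Finset.sum_congr rfl fun q _ => by ring
            rw [this, swap3]
            refine Finset.sum_eq_zero fun q _ => ?_
            have : (∑ a, ∑ b, -(D i' k' q * (B a b * C q a b)))
                = -(D i' k' q * (∑ a, ∑ b, B a b * C q a b)) := by
              rw [Finset.mul_sum, ← Finset.sum_neg_distrib]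
              refine Finset.sum_congr rfl fun a _ => ?_
              rw [Finset.mul_sum, ← Finset.sum_neg_distrib]
            rw [this, hGa q, mul_zero, neg_zero]
          rw [hzero, zero_add]
          have hE2eq : (∑ a, ∑ b, B a b * E i' b a k') = ∑ a, ∑ b, B a b * E i' a b k' := by
            rw [Finset.sum_comm]
            exact Finset.sum_congr rfl fun a _ => Finset.sum_congr rfl fun b _ => by
              rw [hB b a]
          have expandsum : (∑ a, ∑ b, B a b * ((1/2) * (E i' a b k' + E i' b a k' - E i' k' a b)))
              = (1/2) * (∑ a, ∑ b, B a b * E i' a b k') + (1/2) * (∑ a, ∑ b, B a b * E i' b a k')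
                - (1/2) * (∑ a, ∑ b, B a b * E i' k' a b) := by
            simp only [Finset.mul_sum]
            rw [← Finset.sum_add_distrib, ← Finset.sum_sub_distrib]
            refine Finset.sum_congr rfl fun a _ => ?_
            rw [← Finset.sum_add_distrib, ← Finset.sum_sub_distrib]
            exact Finset.sum_congr rfl fun b _ => by ring
          rw [expandsum, hE2eq]
          ring
  -- splitting of half-sums
  have halfsplit : ∀ (X Y Z : Fin n → Fin n → ℝ),
      (∑ a, ∑ b, B a b * ((1/2) * (X a b + Y a b - Z a b)))
        = (1/2) * (∑ a, ∑ b, B a b * X a b) + (1/2) * (∑ a, ∑ b, B a b * Y a b)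
          - (1/2) * (∑ a, ∑ b, B a b * Z a b) := by
    intro X Y Z
    simp only [Finset.mul_sum]
    rw [← Finset.sum_add_distrib, ← Finset.sum_sub_distrib]
    refine Finset.sum_congr rfl fun a _ => ?_
    rw [← Finset.sum_add_distrib, ← Finset.sum_sub_distrib]
    exact Finset.sum_congr rfl fun b _ => by ring
  -- the purely quadratic term T3 vanishes
  have hT3 : (∑ a, ∑ b, ∑ p, ∑ q, B a b * (A k p * (C p i q * C q a b))) = 0 := by
    rw [swap4]
    refine Finset.sum_eq_zero fun p _ => Finset.sum_eq_zero fun q _ => ?_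
    calc (∑ a, ∑ b, B a b * (A k p * (C p i q * C q a b)))
        = (A k p * C p i q) * (∑ a, ∑ b, B a b * C q a b) := by
          rw [mulsum2]
          exact Finset.sum_congr rfl fun a _ => Finset.sum_congr rfl fun b _ => by ring
      _ = 0 := by rw [hGa q, mul_zero]
  -- expansion of the T2 term
  have eT2 : (∑ a, ∑ b, ∑ p, B a b * (A k p * DC a p i b))
      = -(∑ a, ∑ b, ∑ q, B a b * (D a k q * C q i b))
        + ((1/2) * (∑ a, ∑ b, B a b * E a i b k) + (1/2) * (∑ a, ∑ b, B a b * E a b i k)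
           - (1/2) * (∑ a, ∑ b, B a b * E a k i b)) := by
    calc (∑ a, ∑ b, ∑ p, B a b * (A k p * DC a p i b))
        = ∑ a, ∑ b, B a b * (∑ p, A k p * DC a p i b) := by
          refine Finset.sum_congr rfl fun a _ => Finset.sum_congr rfl fun b _ => ?_
          rw [Finset.mul_sum]
      _ = ∑ a, ∑ b, B a b * (-(∑ q, D a k q * C q i b)
            + (1/2) * (E a i b k + E a b i k - E a k i b)) := by
          refine Finset.sum_congr rfl fun a _ => Finset.sum_congr rfl fun b _ => ?_
          rw [expand_contract a k i b]
      _ = ∑ a, ∑ b, (-(∑ q, B a b * (D a k q * C q i b))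
            + B a b * ((1/2) * (E a i b k + E a b i k - E a k i b))) := by
          refine Finset.sum_congr rfl fun a _ => Finset.sum_congr rfl fun b _ => ?_
          rw [mul_add, mul_neg, Finset.mul_sum]
      _ = (∑ a, ∑ b, -(∑ q, B a b * (D a k q * C q i b)))
            + ∑ a, ∑ b, B a b * ((1/2) * (E a i b k + E a b i k - E a k i b)) := by
          simp only [Finset.sum_add_distrib]
      _ = -(∑ a, ∑ b, ∑ q, B a b * (D a k q * C q i b))
            + ((1/2) * (∑ a, ∑ b, B a b * E a i b k) + (1/2) * (∑ a, ∑ b, B a b * E a b i k)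
               - (1/2) * (∑ a, ∑ b, B a b * E a k i b)) := by
          rw [negsum2, halfsplit]
  -- splitting T2a using metric compatibility
  have eT2a : (∑ a, ∑ b, ∑ q, B a b * (D a k q * C q i b))
      = (∑ a, ∑ b, ∑ q, ∑ c, B a b * (A k c * (C c a q * C q i b)))
        + (∑ a, ∑ b, ∑ q, ∑ c, B a b * (A q c * (C c a k * C q i b))) := by
    calc (∑ a, ∑ b, ∑ q, B a b * (D a k q * C q i b))
        = ∑ a, ∑ b, ∑ q, ∑ c, (B a b * (A k c * (C c a q * C q i b))
            + B a b * (A q c * (C c a k * C q i b))) := by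
          refine Finset.sum_congr rfl fun a _ => Finset.sum_congr rfl fun b _ =>
            Finset.sum_congr rfl fun q _ => ?_
          rw [nabla a k q, Finset.sum_mul, Finset.mul_sum]
          exact Finset.sum_congr rfl fun c _ => by ring
      _ = (∑ a, ∑ b, ∑ q, ∑ c, B a b * (A k c * (C c a q * C q i b)))
            + ∑ a, ∑ b, ∑ q, ∑ c, B a b * (A q c * (C c a k * C q i b)) := by
          simp only [Finset.sum_add_distrib]
  -- T4 equals the first piece of T2a
  have eT4 : (∑ a, ∑ b, ∑ p, ∑ q, B a b * (A k p * (C p a q * C q i b)))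
      = ∑ a, ∑ b, ∑ q, ∑ c, B a b * (A k c * (C c a q * C q i b)) := by
    refine Finset.sum_congr rfl fun a _ => Finset.sum_congr rfl fun b _ => ?_
    exact Finset.sum_comm
  -- the second piece of T2a is the quadratic part of H-tilde
  have eQ : (∑ a, ∑ b, ∑ q, ∑ c, B a b * (A q c * (C c a k * C q i b)))
      = ∑ a, ∑ b, ∑ p, ∑ q, B a b * A p q * C p i a * C q k b := by
    calc (∑ a, ∑ b, ∑ q, ∑ c, B a b * (A q c * (C c a k * C q i b)))
        = ∑ b, ∑ a, ∑ q, ∑ c, B a b * (A q c * (C c a k * C q i b)) := Finset.sum_comm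
      _ = ∑ a, ∑ b, ∑ p, ∑ q, B a b * A p q * C p i a * C q k b := by
          refine Finset.sum_congr rfl fun b _ => Finset.sum_congr rfl fun a _ =>
            Finset.sum_congr rfl fun q _ => Finset.sum_congr rfl fun c _ => ?_
          rw [hB a b, hCs c a k]
          ring
  -- E-symmetry bookkeeping
  have f1 : (∑ a, ∑ b, B a b * E a i b k) = ∑ a, ∑ b, B a b * E i a b k := by
    refine Finset.sum_congr rfl fun a _ => Finset.sum_congr rfl fun b _ => ?_
    rw [hE1 a i b k]
  have f2 : (∑ a, ∑ b, B a b * E a k i b) = ∑ a, ∑ b, B a b * E k a b i := by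
    refine Finset.sum_congr rfl fun a _ => Finset.sum_congr rfl fun b _ => ?_
    rw [hE1 a k i b, hE2 k a i b]
  have f3 : (∑ a, ∑ b, B a b * E i k a b) = ∑ a, ∑ b, B a b * E k i a b := by
    refine Finset.sum_congr rfl fun a _ => Finset.sum_congr rfl fun b _ => ?_
    rw [hE1 i k a b]
  -- split the left-hand side
  have e0 : (∑ a, ∑ b, B a b * (∑ p, A k p *
        (DC i p a b - DC a p i b + ∑ q, (C p i q * C q a b - C p a q * C q i b))))
      = (∑ a, ∑ b, ∑ p, B a b * (A k p * DC i p a b))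
        - (∑ a, ∑ b, ∑ p, B a b * (A k p * DC a p i b))
        + ((∑ a, ∑ b, ∑ p, ∑ q, B a b * (A k p * (C p i q * C q a b)))
           - ∑ a, ∑ b, ∑ p, ∑ q, B a b * (A k p * (C p a q * C q i b))) := by
    simp only [Finset.mul_sum, mul_sub, mul_add, Finset.sum_add_distrib,
      Finset.sum_sub_distrib]
  rw [e0]
  linarith [genT1fo i k, genT1fo k i, genT1so i k, genT1so k i, eT2, eT2a, eT4, eQ,
    f1, f2, f3, hT3]


theorem main_identity {n : ℕ} (G : (Fin n → ℝ) → Matrix (Fin n) (Fin n) ℝ)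
    (hG : ∀ a b, ContDiff ℝ (⊤ : ℕ∞) (fun y => G y a b))
    (U : Set (Fin n → ℝ)) (hU : IsOpen U)
    (hpos : ∀ y ∈ U, (G y).PosDef)
    (hGam : ∀ y ∈ U, ∀ c : Fin n, contractedChris G c y = 0)
    {x : Fin n → ℝ} (hx : x ∈ U) (i j : Fin n) :
    -2 * ricci G i j x =
      (∑ k, ∑ l, (G x)⁻¹ k l * pd k (fun y => pd l (fun w => G w i j) y) x)
        + Htilde G i j x := by
  classical
  have hGsymm : ∀ y ∈ U, ∀ a b : Fin n, G y a b = G y b a := by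
    intro y hy a b
    have h := (hpos y hy).1
    have h2 := congrFun (congrFun h b) a
    simpa [Matrix.conjTranspose_apply] using h2
  have hdet : ∀ y ∈ U, (G y).det ≠ 0 := fun y hy => (hpos y hy).det_pos.ne'
  have hdGd : ∀ (a b : Fin n) (y : Fin n → ℝ), DifferentiableAt ℝ (fun z => G z a b) y :=
    fun a b y => ((hG a b).differentiable (by norm_cast)) y
  have hdB : ∀ y ∈ U, ∀ a b : Fin n, DifferentiableAt ℝ (fun z => (G z)⁻¹ a b) y :=
    fun y hy a b => HGFaux2.differentiableAt_inv_entry hG (hdet y hy) a b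
  have hpdG : ∀ (m a b : Fin n), ContDiff ℝ (⊤ : ℕ∞) (fun y => pd m (fun z => G z a b) y) :=
    fun m a b => HGFaux.contDiff_pd m (hG a b)
  have hdpdG : ∀ (m a b : Fin n) (y : Fin n → ℝ),
      DifferentiableAt ℝ (fun z => pd m (fun w => G w a b) z) y :=
    fun m a b y => ((hpdG m a b).differentiable (by norm_cast)) y
  have hchris_eq : ∀ c a b : Fin n, chris G c a b = fun y => (1/2) * ∑ l, (G y)⁻¹ c l *
      (pd a (fun w => G w b l) y + pd b (fun w => G w a l) y - pd l (fun w => G w a b) y) :=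
    fun c a b => rfl
  have hdC : ∀ y ∈ U, ∀ c a b : Fin n, DifferentiableAt ℝ (chris G c a b) y := by
    intro y hy c a b
    rw [hchris_eq]
    apply DifferentiableAt.const_mul
    apply DifferentiableAt.fun_sum
    intro l _
    exact (hdB y hy c l).mul (((hdpdG a b l y).add (hdpdG b a l y)).sub (hdpdG l a b y))
  -- symmetry of the inverse
  have hT : (G x).transpose = G x := by
    ext a b
    rw [Matrix.transpose_apply]
    exact hGsymm x hx b a
  have hBsym : ∀ a b : Fin n, (G x)⁻¹ a b = (G x)⁻¹ b a := by
    intro a b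
    have h1 : ((G x).transpose)⁻¹ = (G x)⁻¹ := by rw [hT]
    rw [← Matrix.transpose_nonsing_inv] at h1
    have h2 := congrFun (congrFun h1 a) b
    rw [Matrix.transpose_apply] at h2
    exact h2.symm
  -- the algebraic identity G * G⁻¹ = 1 on U, entrywise
  have relmulU : ∀ y ∈ U, ∀ a b : Fin n,
      (∑ c, G y a c * (G y)⁻¹ c b) = (if a = b then (1:ℝ) else 0) := by
    intro y hy a b
    have h := Matrix.mul_nonsing_inv (G y) ((hdet y hy).isUnit)
    have h2 := congrFun (congrFun h a) b
    simpa [Matrix.mul_apply, Matrix.one_apply] using h2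
  have hAB : ∀ a b : Fin n,
      (∑ c, G x a c * (G x)⁻¹ c b) = (if a = b then (1:ℝ) else 0) := relmulU x hx
  have hBA : ∀ a b : Fin n,
      (∑ c, (G x)⁻¹ a c * G x c b) = (if a = b then (1:ℝ) else 0) := by
    intro a b
    have h := Matrix.nonsing_inv_mul (G x) ((hdet x hx).isUnit)
    have h2 := congrFun (congrFun h a) b
    simpa [Matrix.mul_apply, Matrix.one_apply] using h2
  -- derivative of the inverse
  have rel : ∀ m a b : Fin n, (∑ c, (G x a c * pd m (fun z => (G z)⁻¹ c b) x
      + (G x)⁻¹ c b * pd m (fun z => G z a c) x)) = 0 := by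
    intro m a b
    have h0 : pd m (fun y => ∑ c, G y a c * (G y)⁻¹ c b) x = 0 := by
      rw [HGFaux.pd_congr m (Filter.eventuallyEq_of_mem (hU.mem_nhds hx)
        (fun y hy => relmulU y hy a b))]
      exact HGFaux.pd_const m x _
    calc (∑ c, (G x a c * pd m (fun z => (G z)⁻¹ c b) x
        + (G x)⁻¹ c b * pd m (fun z => G z a c) x))
        = ∑ c, pd m (fun y => G y a c * (G y)⁻¹ c b) x := by
          refine Finset.sum_congr rfl fun c _ => ?_
          rw [HGFaux.pd_mul m (hdGd a c x) (hdB x hx c b)]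
      _ = pd m (fun y => ∑ c, G y a c * (G y)⁻¹ c b) x :=
          (HGFaux.pd_sum m Finset.univ fun c _ => (hdGd a c x).mul (hdB x hx c b)).symm
      _ = 0 := h0
  have relA : ∀ m p b : Fin n, (∑ a, G x p a * pd m (fun z => (G z)⁻¹ a b) x)
      = -∑ c, (G x)⁻¹ c b * pd m (fun z => G z p c) x := by
    intro m p b
    have h := rel m p b
    rw [Finset.sum_add_distrib] at h
    linarith
  have collapse2 : ∀ (f : Fin n → ℝ) (a : Fin n),
      (∑ b, (if a = b then (1:ℝ) else 0) * f b) = f a := by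
    intro f a; simp [ite_mul]
  have hDBf : ∀ m a b : Fin n, pd m (fun z => (G z)⁻¹ a b) x
      = -∑ p, ∑ q, (G x)⁻¹ a p * pd m (fun z => G z p q) x * (G x)⁻¹ q b := by
    intro m k b
    calc pd m (fun z => (G z)⁻¹ k b) x
        = ∑ a, (if k = a then (1:ℝ) else 0) * pd m (fun z => (G z)⁻¹ a b) x :=
          (collapse2 (fun a => pd m (fun z => (G z)⁻¹ a b) x) k).symm
      _ = ∑ a, (∑ p, (G x)⁻¹ k p * G x p a) * pd m (fun z => (G z)⁻¹ a b) x := by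
          refine Finset.sum_congr rfl fun a _ => ?_
          rw [hBA k a]
      _ = ∑ a, ∑ p, (G x)⁻¹ k p * (G x p a * pd m (fun z => (G z)⁻¹ a b) x) := by
          refine Finset.sum_congr rfl fun a _ => ?_
          rw [Finset.sum_mul]
          exact Finset.sum_congr rfl fun p _ => by ring
      _ = ∑ p, ∑ a, (G x)⁻¹ k p * (G x p a * pd m (fun z => (G z)⁻¹ a b) x) :=
          Finset.sum_comm
      _ = ∑ p, (G x)⁻¹ k p * (∑ a, G x p a * pd m (fun z => (G z)⁻¹ a b) x) := by
          refine Finset.sum_congr rfl fun p _ => ?_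
          rw [Finset.mul_sum]
      _ = ∑ p, (G x)⁻¹ k p * (-∑ c, (G x)⁻¹ c b * pd m (fun z => G z p c) x) := by
          refine Finset.sum_congr rfl fun p _ => ?_
          rw [relA m p b]
      _ = ∑ p, -(∑ q, (G x)⁻¹ k p * pd m (fun z => G z p q) x * (G x)⁻¹ q b) := by
          refine Finset.sum_congr rfl fun p _ => ?_
          rw [mul_neg, Finset.mul_sum]
          congr 1
          exact Finset.sum_congr rfl fun q _ => by ring
      _ = -∑ p, ∑ q, (G x)⁻¹ k p * pd m (fun z => G z p q) x * (G x)⁻¹ q b :=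
          Finset.sum_neg_distrib _
  -- derivative of the Christoffel symbols
  have hDCf : ∀ m c a b : Fin n, pd m (chris G c a b) x
      = (1/2) * ∑ l, (pd m (fun z => (G z)⁻¹ c l) x *
          (pd a (fun w => G w b l) x + pd b (fun w => G w a l) x - pd l (fun w => G w a b) x)
        + (G x)⁻¹ c l * (pd m (fun z => pd a (fun w => G w b l) z) x
            + pd m (fun z => pd b (fun w => G w a l) z) x
            - pd m (fun z => pd l (fun w => G w a b) z) x)) := by
    intro m c a b
    have hdInner : ∀ l : Fin n, DifferentiableAt ℝ (fun y => (G y)⁻¹ c l *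
        (pd a (fun w => G w b l) y + pd b (fun w => G w a l) y - pd l (fun w => G w a b) y)) x :=
      fun l => (hdB x hx c l).mul (((hdpdG a b l x).add (hdpdG b a l x)).sub (hdpdG l a b x))
    rw [hchris_eq]
    rw [HGFaux.pd_const_mul m (1/2) (DifferentiableAt.fun_sum fun l _ => hdInner l)]
    congr 1
    rw [HGFaux.pd_sum m Finset.univ fun l _ => hdInner l]
    refine Finset.sum_congr rfl fun l _ => ?_
    rw [HGFaux.pd_mul m (hdB x hx c l)
      (((hdpdG a b l x).fun_add (hdpdG b a l x)).fun_sub (hdpdG l a b x))]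
    rw [HGFaux.pd_sub m ((hdpdG a b l x).fun_add (hdpdG b a l x)) (hdpdG l a b x)]
    rw [HGFaux.pd_add m (hdpdG a b l x) (hdpdG b a l x)]
    ring
  -- the vanishing of the contracted Christoffel symbols, and its derivative
  have hGa : ∀ c : Fin n, (∑ p, ∑ q, (G x)⁻¹ p q * chris G c p q x) = 0 :=
    fun c => hGam x hx c
  have hdGam : ∀ m c : Fin n, (∑ p, ∑ q, (pd m (fun z => (G z)⁻¹ p q) x * chris G c p q x
      + (G x)⁻¹ p q * pd m (chris G c p q) x)) = 0 := by
    intro m c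
    have h0 : pd m (contractedChris G c) x = 0 := by
      rw [HGFaux.pd_congr m (Filter.eventuallyEq_of_mem (hU.mem_nhds hx)
        (fun y hy => hGam y hy c))]
      exact HGFaux.pd_const m x 0
    have h1 : contractedChris G c = fun y => ∑ p, ∑ q, (G y)⁻¹ p q * chris G c p q y := rfl
    rw [h1] at h0
    rw [HGFaux.pd_sum m Finset.univ (fun p _ => DifferentiableAt.fun_sum
      fun q _ => (hdB x hx p q).fun_mul (hdC x hx c p q))] at h0
    calc (∑ p, ∑ q, (pd m (fun z => (G z)⁻¹ p q) x * chris G c p q x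
        + (G x)⁻¹ p q * pd m (chris G c p q) x))
        = ∑ p, pd m (fun y => ∑ q, (G y)⁻¹ p q * chris G c p q y) x := by
          refine Finset.sum_congr rfl fun p _ => ?_
          rw [HGFaux.pd_sum m Finset.univ fun q _ => (hdB x hx p q).fun_mul (hdC x hx c p q)]
          refine Finset.sum_congr rfl fun q _ => ?_
          rw [HGFaux.pd_mul m (hdB x hx p q) (hdC x hx c p q)]
          ring
      _ = 0 := h0
  -- assemble everything via the algebraic key lemma
  have hD : ∀ m a b : Fin n, pd m (fun z => G z a b) x = pd m (fun z => G z b a) x := by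
    intro m a b
    exact HGFaux.pd_congr m (Filter.eventuallyEq_of_mem (hU.mem_nhds hx)
      fun y hy => hGsymm y hy a b)
  have hE1 : ∀ m l a b : Fin n, pd m (fun z => pd l (fun w => G w a b) z) x
      = pd l (fun z => pd m (fun w => G w a b) z) x :=
    fun m l a b => HGFaux.pd_swap m l (hG a b) x
  have hE2 : ∀ m l a b : Fin n, pd m (fun z => pd l (fun w => G w a b) z) x
      = pd m (fun z => pd l (fun w => G w b a) z) x := by
    intro m l a b
    refine HGFaux.pd_congr m (Filter.eventuallyEq_of_mem (hU.mem_nhds hx) fun y hy => ?_)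
    exact HGFaux.pd_congr l (Filter.eventuallyEq_of_mem (hU.mem_nhds hy)
      fun z hz => hGsymm z hz a b)
  have key := key_algebra (fun a b => G x a b) (fun a b => (G x)⁻¹ a b)
    (fun c a b => chris G c a b x) (fun m a b => pd m (fun z => G z a b) x)
    (fun m l a b => pd m (fun z => pd l (fun w => G w a b) z) x)
    (fun m a b => pd m (fun z => (G z)⁻¹ a b) x)
    (fun m c a b => pd m (chris G c a b) x)
    hBsym hAB (fun c a b => rfl) hD hE1 hE2 hDBf hDCf hGa hdGam i j
  simp only [ricci, riem, riemUp, Htilde]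
  exact key

/-- **Hyperbolic geometric flow in elliptic coordinates** (equations (3.6)–(3.7)):
if the contracted Christoffel symbols vanish identically, then
`-2 R_{ij} = g^{kl} ∂²g_{ij}/∂x^k∂x^l + H̃_{ij}`, and consequently the hyperbolic
geometric flow is equivalent to the strictly hyperbolic system
`∂²g_{ij}/∂t² = g^{kl} ∂²g_{ij}/∂x^k∂x^l + H̃_{ij}`. -/
theorem hgf_in_elliptic_coordinates (n : ℕ) (hn : 2 ≤ n)
    (U : Set (Fin n → ℝ)) (hU : IsOpen U)
    (g : ℝ → (Fin n → ℝ) → Matrix (Fin n) (Fin n) ℝ)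
    (hsmooth : ∀ i j, ContDiff ℝ (⊤ : ℕ∞) (fun q : ℝ × (Fin n → ℝ) => g q.1 q.2 i j))
    (hmetric : ∀ t : ℝ, ∀ x ∈ U, (g t x).PosDef)
    (helliptic : ∀ t : ℝ, ∀ x ∈ U, ∀ k : Fin n, contractedChris (g t) k x = 0) :
    (∀ t : ℝ, ∀ x ∈ U, ∀ i j : Fin n,
      -2 * ricci (g t) i j x =
        (∑ k, ∑ l, (g t x)⁻¹ k l * pd k (fun y => pd l (fun w => g t w i j) y) x)
          + Htilde (g t) i j x) ∧
    ((∀ t : ℝ, ∀ x ∈ U, ∀ i j : Fin n,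
        deriv (fun s => deriv (fun r => g r x i j) s) t = -2 * ricci (g t) i j x) ↔
      (∀ t : ℝ, ∀ x ∈ U, ∀ i j : Fin n,
        deriv (fun s => deriv (fun r => g r x i j) s) t =
          (∑ k, ∑ l, (g t x)⁻¹ k l * pd k (fun y => pd l (fun w => g t w i j) y) x)
            + Htilde (g t) i j x)) := by
  have key : ∀ t : ℝ, ∀ x ∈ U, ∀ i j : Fin n,
      -2 * ricci (g t) i j x =
        (∑ k, ∑ l, (g t x)⁻¹ k l * pd k (fun y => pd l (fun w => g t w i j) y) x)
          + Htilde (g t) i j x := by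
    intro t x hx i j
    exact main_identity (g t)
      (fun a b => (hsmooth a b).comp (contDiff_const.prodMk contDiff_id))
      U hU (hmetric t) (helliptic t) hx i j
  refine ⟨key, ?_⟩
  constructor
  · intro H t x hx i j
    rw [← key t x hx i j]
    exact H t x hx i j
  · intro H t x hx i j
    rw [key t x hx i j]
    exact H t x hx i j
end
end

section
/- Symmetric hyperbolicity of the first-order reduction (system (3.9)): let n ≥ 2, N = n(n+1)/2, and let G = (g^{kl}) be a symmetric positive definite n×n real matrix. Define the square matrix A⁰ of size (n+2)N as the block matrix diag(I_N, (g^{kl} I_N)_{k,l=1,…,n}, I_N) (i.e. an I_N block, then an n×n grid of blocks whose (k,l) block is g^{kl} I_N, then an I_N block), and for each j = 1, …, n define the square matrix A^j of size (n+2)N whose only nonzero blocks are: the block in block-row k ∈ {2, …, n+1} (indexed by k = 1, …, n) and the last block-column, equal to g^{jk} I_N, and the block in the last block-row and block-column k, equal to g^{kj} I_N. Then A⁰ is symmetric and positive definite, and each A^j is symmetric. -/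
noncomputable section

open scoped BigOperators

/-- The coefficient matrix `A⁰ = diag(I_N, (g^{kl} I_N)_{k,l}, I_N)` of the first-order
reduction (3.9) of the hyperbolic geometric flow; the block index type
`Fin N ⊕ (Fin n × Fin N) ⊕ Fin N` realises the `(n+2)N × (n+2)N` block structure. -/
def hgfA0 (n N : ℕ) (G : Matrix (Fin n) (Fin n) ℝ) :
    Matrix (Fin N ⊕ Fin n × Fin N ⊕ Fin N) (Fin N ⊕ Fin n × Fin N ⊕ Fin N) ℝ :=
  Matrix.of fun r c =>
    match r, c with
    | Sum.inl a, Sum.inl b => if a = b then 1 else 0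
    | Sum.inr (Sum.inl (k, a)), Sum.inr (Sum.inl (l, b)) => G k l * (if a = b then 1 else 0)
    | Sum.inr (Sum.inr a), Sum.inr (Sum.inr b) => if a = b then 1 else 0
    | _, _ => 0

/-- The coefficient matrix `A^j` of the first-order reduction (3.9): its only nonzero
blocks are `g^{jk} I_N` in block-row `k` of the middle group and the last block-column,
and `g^{kj} I_N` in the last block-row and middle block-column `k`. -/
def hgfAj (n N : ℕ) (G : Matrix (Fin n) (Fin n) ℝ) (j : Fin n) :
    Matrix (Fin N ⊕ Fin n × Fin N ⊕ Fin N) (Fin N ⊕ Fin n × Fin N ⊕ Fin N) ℝ :=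
  Matrix.of fun r c =>
    match r, c with
    | Sum.inr (Sum.inl (k, a)), Sum.inr (Sum.inr b) => G j k * (if a = b then 1 else 0)
    | Sum.inr (Sum.inr a), Sum.inr (Sum.inl (k, b)) => G k j * (if a = b then 1 else 0)
    | _, _ => 0

open Matrix

private lemma hgfA0_quad (n N : ℕ) (G : Matrix (Fin n) (Fin n) ℝ)
    (x : Fin N ⊕ Fin n × Fin N ⊕ Fin N → ℝ) :
    x ⬝ᵥ (hgfA0 n N G) *ᵥ x =
      (∑ a, x (.inl a) * x (.inl a)) +
      (∑ a : Fin N, (fun k => x (.inr (.inl (k,a)))) ⬝ᵥ G *ᵥ (fun k => x (.inr (.inl (k,a))))) +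
      ∑ a : Fin N, x (.inr (.inr a)) * x (.inr (.inr a)) := by
  simp only [dotProduct, Matrix.mulVec, hgfA0, Matrix.of_apply, Fintype.sum_sum_type,
    Fintype.sum_prod_type, mul_ite, ite_mul, mul_zero, zero_mul, mul_one, one_mul,
    Finset.sum_ite_eq, Finset.mem_univ, if_true, add_zero, zero_add, Finset.mul_sum,
    Finset.sum_mul, Finset.sum_const_zero]
  rw [Finset.sum_comm]
  ring_nf

private lemma hgfA0_isSymm (n N : ℕ) (G : Matrix (Fin n) (Fin n) ℝ) (hG : G.IsSymm) :
    (hgfA0 n N G).IsSymm := by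
  ext r c
  rcases r with a | ⟨⟨k, a⟩ | a⟩ <;> rcases c with b | ⟨⟨l, b⟩ | b⟩ <;>
    simp [hgfA0, Matrix.transpose_apply, hG.apply, eq_comm]

/-- **Symmetric hyperbolicity of the first-order reduction** (system (3.9)): for a
symmetric positive definite matrix `G = (g^{kl})` and `N = n(n+1)/2`, the matrix `A⁰`
is symmetric positive definite and each `A^j` is symmetric. -/
theorem hgf_first_order_reduction_symmetric_hyperbolic (n : ℕ) (hn : 2 ≤ n)
    (G : Matrix (Fin n) (Fin n) ℝ) (hG : G.IsSymm) (hGpos : G.PosDef) :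
    (hgfA0 n (n * (n + 1) / 2) G).IsSymm ∧ (hgfA0 n (n * (n + 1) / 2) G).PosDef ∧
      ∀ j : Fin n, (hgfAj n (n * (n + 1) / 2) G j).IsSymm := by
  set N := n * (n + 1) / 2 with hN
  have hsymm := hgfA0_isSymm n N G hG
  refine ⟨hsymm, posDef_iff_dotProduct_mulVec.mpr ⟨?_, ?_⟩, ?_⟩
  · exact hsymm  -- IsHermitian over ℝ
  · intro x hx
    have hquad := hgfA0_quad n N G x
    simp only [star_trivial, RCLike.re_to_real]
    rw [hquad]
    -- each piece is nonneg
    have h1 : 0 ≤ ∑ a, x (.inl a) * x (.inl a) :=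
      Finset.sum_nonneg fun a _ => mul_self_nonneg _
    have h3 : 0 ≤ ∑ a : Fin N, x (.inr (.inr a)) * x (.inr (.inr a)) :=
      Finset.sum_nonneg fun a _ => mul_self_nonneg _
    have h2 : 0 ≤ ∑ a : Fin N,
        (fun k => x (.inr (.inl (k,a)))) ⬝ᵥ G *ᵥ (fun k => x (.inr (.inl (k,a)))) := by
      refine Finset.sum_nonneg fun a _ => ?_
      have := hGpos.posSemidef.dotProduct_mulVec_nonneg (fun k => x (.inr (.inl (k,a))))
      simpa using this
    -- some coordinate is nonzero
    rcases Function.ne_iff.mp hx with ⟨r, hr⟩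
    rcases r with a | ⟨⟨k, a⟩ | a⟩
    · have : 0 < ∑ a, x (.inl a) * x (.inl a) := by
        refine Finset.sum_pos' (fun b _ => mul_self_nonneg _) ⟨a, Finset.mem_univ a, ?_⟩
        exact mul_self_pos.mpr hr
      linarith
    · have : 0 < (fun k => x (.inr (.inl (k,a)))) ⬝ᵥ G *ᵥ (fun k => x (.inr (.inl (k,a)))) := by
        have hy : (fun k => x (.inr (.inl (k,a)))) ≠ 0 := by
          intro h
          exact hr (congrFun h k)
        have := hGpos.dotProduct_mulVec_pos hy
        simpa using this
      have hle : (fun k => x (.inr (.inl (k,a)))) ⬝ᵥ G *ᵥ (fun k => x (.inr (.inl (k,a)))) ≤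
          ∑ a : Fin N, (fun k => x (.inr (.inl (k,a)))) ⬝ᵥ G *ᵥ (fun k => x (.inr (.inl (k,a)))) := by
        refine Finset.single_le_sum (f := fun c : Fin N => (fun k => x (.inr (.inl (k,c)))) ⬝ᵥ G *ᵥ (fun k => x (.inr (.inl (k,c))))) (fun b _ => ?_) (Finset.mem_univ a)
        have := hGpos.posSemidef.dotProduct_mulVec_nonneg (fun k => x (.inr (.inl (k,b))))
        simpa using this
      linarith
    · have : 0 < ∑ b : Fin N, x (.inr (.inr b)) * x (.inr (.inr b)) := by
        refine Finset.sum_pos' (fun b _ => mul_self_nonneg _) ⟨a, Finset.mem_univ a, ?_⟩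
        exact mul_self_pos.mpr hr
      linarith
  · intro j
    ext r c
    rcases r with a | ⟨⟨k, a⟩ | a⟩ <;> rcases c with b | ⟨⟨l, b⟩ | b⟩ <;>
      simp [hgfAj, Matrix.transpose_apply, hG.apply, eq_comm]
end
end
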